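/- arXiv:1401.3133 — 12 statements merged into one kernel-verified Lean document; each statement's English description precedes it below -/
import Mathlib

section
/- Let A be an acceptance set in L^∞ (a nonempty proper subset closed upward: X ∈ A and Y ≥ X a.s. imply Y ∈ A). Then the following are equivalent: (a) A is surplus invariant (X ∈ A and Y⁻ = X⁻ imply Y ∈ A); (b) X ∈ A implies X·1_B ∈ A for every measurable set B; (c) X ∈ A implies -X⁻ ∈ A. In particular, every surplus-invariant acceptance set contains 0. -/
open MeasureTheory

variable {Ω : Type*} [MeasurableSpace Ω]

/-- An acceptance set: a nonempty, proper subset of `L^∞` that is upward closed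
(w.r.t. the a.e. order on `Lp ℝ ∞ μ`). -/
def IsAcceptanceSet (μ : Measure Ω) (A : Set (Lp ℝ ⊤ μ)) : Prop :=
  A.Nonempty ∧ A ≠ Set.univ ∧ ∀ X ∈ A, ∀ Y : Lp ℝ ⊤ μ, X ≤ Y → Y ∈ A

/-- Surplus invariance: if `X ∈ A` and `Y⁻ = X⁻` then `Y ∈ A`.
Here `X⁻ = (-X) ⊔ 0` is the negative part. -/
def SurplusInvariant (μ : Measure Ω) (A : Set (Lp ℝ ⊤ μ)) : Prop :=
  ∀ X ∈ A, ∀ Y : Lp ℝ ⊤ μ, (-Y) ⊔ 0 = (-X) ⊔ 0 → Y ∈ A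

theorem surplus_invariance_characterization
    (μ : Measure Ω) [IsProbabilityMeasure μ] (A : Set (Lp ℝ ⊤ μ))
    (hA : IsAcceptanceSet μ A) :
    (SurplusInvariant μ A ↔
       ∀ X ∈ A, ∀ B : Set Ω, MeasurableSet B →
         ∀ Y : Lp ℝ ⊤ μ, (⇑Y =ᵐ[μ] fun ω => X ω * B.indicator 1 ω) → Y ∈ A) ∧
    (SurplusInvariant μ A ↔ ∀ X ∈ A, X ⊓ 0 ∈ A) ∧
    (SurplusInvariant μ A → (0 : Lp ℝ ⊤ μ) ∈ A) := by
  obtain ⟨⟨W, hW⟩, -, hup⟩ := hA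
  -- lattice identity: the negative part of `Z ⊓ 0` is the negative part of `Z`
  have hneg : ∀ Z : Lp ℝ ⊤ μ, (-(Z ⊓ 0)) ⊔ 0 = (-Z) ⊔ 0 := by
    intro Z
    rw [neg_inf, neg_zero, sup_assoc, sup_idem]
  -- (a) → (c)
  have hc_of_a : SurplusInvariant μ A → ∀ X ∈ A, X ⊓ 0 ∈ A := fun hs X hX =>
    hs X hX (X ⊓ 0) (hneg X)
  -- (c) → (a)
  have ha_of_c : (∀ X ∈ A, X ⊓ 0 ∈ A) → SurplusInvariant μ A := by
    intro hc X hX Y hY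
    have h1 : Y ⊓ 0 = X ⊓ 0 := by
      have := congrArg (fun z => -z) hY
      simpa [neg_sup, neg_neg, neg_zero] using this
    exact hup _ (h1 ▸ hc X hX) Y inf_le_left
  -- (a) → (b)
  have hb_of_a : SurplusInvariant μ A →
      ∀ X ∈ A, ∀ B : Set Ω, MeasurableSet B →
        ∀ Y : Lp ℝ ⊤ μ, (⇑Y =ᵐ[μ] fun ω => X ω * B.indicator 1 ω) → Y ∈ A := by
    intro hs X hX B _ Y hY
    have hXA : X ⊓ 0 ∈ A := hc_of_a hs X hX
    have hle : X ⊓ 0 ≤ Y ⊓ 0 := by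
      rw [← Lp.coeFn_le]
      filter_upwards [Lp.coeFn_inf X 0, Lp.coeFn_inf Y 0, hY,
        Lp.coeFn_zero ℝ ⊤ μ] with ω h1 h2 h3 h4
      simp only [h1, h2, Pi.inf_apply, h4, Pi.zero_apply, h3]
      by_cases hω : ω ∈ B
      · simp [Set.indicator_of_mem hω]
      · simp only [Set.indicator_of_notMem hω, mul_zero]
        exact inf_le_right.trans (by simp)
    have hYA : Y ⊓ 0 ∈ A := hup _ hXA _ hle
    exact hs (Y ⊓ 0) hYA Y (hneg Y).symm
  -- (b) → (c)
  have hc_of_b : (∀ X ∈ A, ∀ B : Set Ω, MeasurableSet B →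
      ∀ Y : Lp ℝ ⊤ μ, (⇑Y =ᵐ[μ] fun ω => X ω * B.indicator 1 ω) → Y ∈ A) →
      ∀ X ∈ A, X ⊓ 0 ∈ A := by
    intro hb X hX
    set B : Set Ω := {ω | X ω ≤ 0} with hBdef
    have hB : MeasurableSet B :=
      measurableSet_le (Lp.stronglyMeasurable X).measurable measurable_const
    refine hb X hX B hB (X ⊓ 0) ?_
    filter_upwards [Lp.coeFn_inf X 0, Lp.coeFn_zero ℝ ⊤ μ] with ω h1 h2
    simp only [h1, Pi.inf_apply, h2, Pi.zero_apply]
    by_cases hω : ω ∈ B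
    · simp [Set.indicator_of_mem hω, min_eq_left (show X ω ≤ 0 from hω)]
    · have hpos : ¬ X ω ≤ 0 := hω
      simp [Set.indicator_of_notMem hω, min_eq_right (le_of_not_ge hpos)]
  refine ⟨⟨hb_of_a, fun hb => ha_of_c (hc_of_b hb)⟩, ⟨hc_of_a, ha_of_c⟩, ?_⟩
  intro hs
  exact hup _ (hc_of_a hs W hW) 0 inf_le_right
end

section
/- Let B ∈ F with P(B) > 0 and V ∈ L^∞, and define SPAN(B,V) := {X ∈ L^∞ : X·1_B ≥ V·1_B a.s.}. Then SPAN(B,V) is a closed convex acceptance set, and it is surplus invariant if and only if V·1_B ≤ 0 a.s. -/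
open MeasureTheory

variable {Ω : Type*} [MeasurableSpace Ω]

/-- The SPAN-type acceptance set `SPAN(B,V) = {X : X·1_B ≥ V·1_B a.s.}`. -/
def SPANV (μ : Measure Ω) (B : Set Ω) (V : Lp ℝ ⊤ μ) : Set (Lp ℝ ⊤ μ) :=
  {X | ∀ᵐ ω ∂μ, ω ∈ B → V ω ≤ X ω}

/-- a.e. bound by the `L∞` norm. -/
lemma ae_norm_le_Linfty {μ : Measure Ω} (f : Lp ℝ ⊤ μ) :
    ∀ᵐ ω ∂μ, ‖f ω‖ ≤ ‖f‖ := by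
  have h := MeasureTheory.ae_le_eLpNormEssSup (f := ⇑f) (μ := μ)
  have hne : eLpNormEssSup (⇑f) μ ≠ ⊤ := by
    rw [← eLpNorm_exponent_top]; exact Lp.eLpNorm_ne_top f
  filter_upwards [h] with ω hω
  rw [Lp.norm_def, eLpNorm_exponent_top]
  calc ‖f ω‖ = ((‖f ω‖₊ : ENNReal)).toReal := by simp
    _ ≤ _ := ENNReal.toReal_mono hne hω

set_option synthInstance.maxHeartbeats 1000000 in
theorem SPANV_closed_convex_and_surplusInvariant_iff
    (μ : Measure Ω) [IsProbabilityMeasure μ] (B : Set Ω)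
    (hB : MeasurableSet B) (hBpos : 0 < μ B) (V : Lp ℝ ⊤ μ) :
    IsAcceptanceSet μ (SPANV μ B V) ∧
    Convex ℝ (SPANV μ B V) ∧
    IsClosed (SPANV μ B V) ∧
    (SurplusInvariant μ (SPANV μ B V) ↔ ∀ᵐ ω ∂μ, ω ∈ B → V ω ≤ 0) := by
  have hVmem : V ∈ SPANV μ B V := by
    show ∀ᵐ ω ∂μ, ω ∈ B → V ω ≤ V ω
    exact Filter.Eventually.of_forall fun ω _ => le_rfl
  refine ⟨⟨⟨V, hVmem⟩, ?_, ?_⟩, ?_, ?_, ?_⟩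
  · -- properness
    intro h
    have hmem : V - Lp.const ⊤ μ (1 : ℝ) ∈ SPANV μ B V := h ▸ Set.mem_univ _
    have hc : ∀ᵐ ω ∂μ, (V - Lp.const ⊤ μ (1 : ℝ)) ω = V ω - 1 := by
      filter_upwards [Lp.coeFn_sub V (Lp.const ⊤ μ (1 : ℝ)),
        Lp.coeFn_const (p := ⊤) (μ := μ) (1 : ℝ)] with ω h1 h2
      rw [h1, Pi.sub_apply, h2]; rfl
    have : ∀ᵐ ω ∂μ, ω ∉ B := by
      filter_upwards [hmem, hc] with ω h1 h2 hω
      have := h1 hω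
      rw [h2] at this; linarith
    exact absurd (measure_eq_zero_iff_ae_notMem.2 this) hBpos.ne'
  · -- upward closed
    intro X hX Y hXY
    have hle : ∀ᵐ ω ∂μ, X ω ≤ Y ω := (Lp.coeFn_le X Y).2 hXY
    filter_upwards [hX, hle] with ω h1 h2 hω
    exact (h1 hω).trans h2
  · -- convex
    intro X hX Y hY a b ha hb hab
    have hc : ∀ᵐ ω ∂μ, (a • X + b • Y) ω = a * X ω + b * Y ω := by
      filter_upwards [Lp.coeFn_add (a • X) (b • Y), Lp.coeFn_smul a X,
        Lp.coeFn_smul b Y] with ω h1 h2 h3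
      rw [h1, Pi.add_apply, h2, h3]; rfl
    filter_upwards [hX, hY, hc] with ω h1 h2 h3 hω
    rw [h3]
    calc V ω = a * V ω + b * V ω := by rw [← add_mul, hab, one_mul]
      _ ≤ a * X ω + b * Y ω :=
        add_le_add (mul_le_mul_of_nonneg_left (h1 hω) ha)
          (mul_le_mul_of_nonneg_left (h2 hω) hb)
  · -- closed
    refine IsSeqClosed.isClosed ?_
    intro f X hf hX
    have key : ∀ n : ℕ, ∀ᵐ ω ∂μ, ω ∈ B → V ω ≤ X ω + 1 / (n + 1) := by
      intro n
      have hpos : (0 : ℝ) < 1 / (n + 1) := by positivity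
      obtain ⟨k, hk⟩ := (Metric.tendsto_atTop.1 hX (1 / (n + 1)) hpos) |>.imp
        (fun k h => h k le_rfl)
      have hdist : ‖f k - X‖ < 1 / (n + 1) := by
        rw [← dist_eq_norm]; exact hk
      filter_upwards [hf k, ae_norm_le_Linfty (f k - X),
        Lp.coeFn_sub (f k) X] with ω h1 h2 h3 hω
      simp only [h3, Pi.sub_apply, Real.norm_eq_abs] at h2
      have := abs_le.1 h2
      have := h1 hω
      linarith [hdist]
    have hall : ∀ᵐ ω ∂μ, ∀ n : ℕ, ω ∈ B → V ω ≤ X ω + 1 / (n + 1) :=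
      (MeasureTheory.ae_all_iff).2 key
    filter_upwards [hall] with ω h hω
    refine le_of_forall_pos_le_add fun ε hε => ?_
    obtain ⟨n, hn⟩ := exists_nat_one_div_lt hε
    exact (h n hω).trans (by linarith [hn])
  · -- surplus invariant iff
    constructor
    · intro hSI
      have hVabs : |V| ∈ SPANV μ B V := by
        filter_upwards [Lp.coeFn_abs V] with ω h1 _
        rw [h1]; exact le_abs_self _
      have h0 : (0 : Lp ℝ ⊤ μ) ∈ SPANV μ B V := by
        refine hSI |V| hVabs 0 ?_
        rw [neg_zero, sup_idem, sup_eq_right.2 (neg_nonpos.2 (abs_nonneg V))]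
      filter_upwards [h0, Lp.coeFn_zero ℝ ⊤ μ] with ω h1 h2 hω
      have := h1 hω
      rwa [h2] at this
    · intro hV X hX Y hY
      have hYX : ∀ᵐ ω ∂μ, max (-Y ω) 0 = max (-X ω) 0 := by
        have : ⇑((-Y) ⊔ 0) =ᵐ[μ] ⇑((-X) ⊔ 0) := hY ▸ Filter.EventuallyEq.refl _ _
        filter_upwards [this, Lp.coeFn_sup (-Y) 0, Lp.coeFn_sup (-X) 0,
          Lp.coeFn_neg Y, Lp.coeFn_neg X, Lp.coeFn_zero ℝ ⊤ μ] with ω h1 h2 h3 h4 h5 h6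
        have h2' : ((-Y) ⊔ 0 : Lp ℝ ⊤ μ) ω = max (-Y ω) 0 := by
          rw [h2]; simp only [Pi.sup_apply, h4, h6, Pi.neg_apply, Pi.zero_apply]
        have h3' : ((-X) ⊔ 0 : Lp ℝ ⊤ μ) ω = max (-X ω) 0 := by
          rw [h3]; simp only [Pi.sup_apply, h5, h6, Pi.neg_apply, Pi.zero_apply]
        rw [← h2', ← h3', h1]
      filter_upwards [hX, hV, hYX] with ω h1 h2 h3 hω
      rcases le_or_gt 0 (Y ω) with hy | hy
      · exact (h2 hω).trans hy
      · have hmax : max (-Y ω) 0 = -Y ω := max_eq_left (by linarith)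
        rw [hmax] at h3
        have hXω : -X ω = -Y ω := by
          rcases le_or_gt (-X ω) 0 with h | h
          · rw [max_eq_right h] at h3; linarith
          · rw [max_eq_left h.le] at h3; linarith
        have : Y ω = X ω := by linarith
        rw [this]; exact h1 hω
end

section
/- The only sensitive, surplus-invariant acceptance set in L^∞ is the positive cone L^∞₊ = {X ∈ L^∞ : X ≥ 0 a.s.}. -/
open MeasureTheory

variable {Ω : Type*} [MeasurableSpace Ω]

theorem sensitive_surplusInvariant_is_positive_cone
    (μ : Measure Ω) [IsProbabilityMeasure μ]
    (A : Set (Lp ℝ ⊤ μ)) (hA : IsAcceptanceSet μ A)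
    (hsi : SurplusInvariant μ A)
    (hsens : ∀ X : Lp ℝ ⊤ μ, X ≤ 0 → X ≠ 0 → X ∉ A) :
    A = {X : Lp ℝ ⊤ μ | 0 ≤ X} := by
  obtain ⟨⟨X₀, hX₀⟩, _, hup⟩ := hA
  -- If X ∈ A, then -X⁻ ∈ A by surplus invariance.
  have key : ∀ X ∈ A, (-((-X) ⊔ 0)) ∈ A := by
    intro X hX
    apply hsi X hX
    rw [neg_neg, sup_assoc, sup_idem]
  -- If X ∈ A then X⁻ = 0, i.e. 0 ≤ X.
  have pos : ∀ X ∈ A, 0 ≤ X := by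
    intro X hX
    have h1 := key X hX
    have h2 : (-((-X) ⊔ 0)) ≤ 0 := neg_nonpos.mpr le_sup_right
    have h3 : (-((-X) ⊔ 0)) = 0 := by
      by_contra h
      exact hsens _ h2 h h1
    rw [neg_eq_zero, sup_eq_right] at h3
    exact neg_nonpos.mp h3
  -- 0 ∈ A
  have h0 : (0 : Lp ℝ ⊤ μ) ∈ A := by
    have h3 : (-((-X₀) ⊔ 0)) = 0 := by
      by_contra h
      exact hsens _ (neg_nonpos.mpr le_sup_right) h (key X₀ hX₀)
    rw [← h3]; exact key X₀ hX₀
  ext X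
  exact ⟨fun hX => pos X hX, fun hX => hup 0 h0 X hX⟩
end

section
/- Let B ∈ F with 0 < P(B) < 1, ε, γ > 0, and X := -ε·1_B + γ·1_{B^c}. Fix α with P(B) < α < 1. Then TVaR_α(X) = (ε/α)·P(B) + γ·(P(B)/α − 1) and TVaR_α(-X⁻) = (ε/α)·P(B) > 0. In particular, for γ sufficiently large, X is acceptable under the TVaR_α acceptance set while -X⁻ is not, so the TVaR_α acceptance set is not surplus invariant. -/
open scoped Classical

open MeasureTheory

variable {Ω : Type*} [MeasurableSpace Ω]

/-- Value-at-Risk at level `β`: `VaR_β(X) = inf {m : P(X + m < 0) ≤ β}`. -/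
noncomputable def VaR (μ : Measure Ω) (β : ℝ) (X : Ω → ℝ) : ℝ :=
  sInf {m : ℝ | (μ {ω | X ω + m < 0}).toReal ≤ β}

/-- Tail Value-at-Risk at level `α`: `TVaR_α(X) = (1/α) ∫₀^α VaR_β(X) dβ`. -/
noncomputable def TVaR (μ : Measure Ω) (α : ℝ) (X : Ω → ℝ) : ℝ :=
  (1 / α) * ∫ β in (0:ℝ)..α, VaR μ β X

lemma VaR_twoPoint (μ : Measure Ω) [IsProbabilityMeasure μ]
    (B : Set Ω) (ε γ : ℝ) (hε : 0 < ε) (hγ : 0 ≤ γ)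
    (β : ℝ) (hβ0 : 0 ≤ β) (hβ1 : β < 1) :
    VaR μ β (fun ω => if ω ∈ B then -ε else γ)
      = if β < (μ B).toReal then ε else -γ := by
  have hset : ∀ m : ℝ, {ω | (if ω ∈ B then -ε else γ) + m < 0}
      = if m < -γ then Set.univ else if m < ε then B else (∅ : Set Ω) := by
    intro m
    ext ω
    by_cases hω : ω ∈ B <;> by_cases h1 : m < -γ <;> by_cases h2 : m < ε <;>
      simp [hω, h1, h2] <;> first | linarith | (constructor <;> intro <;> linarith)
  have hp1 : (μ B).toReal ≤ 1 := by
    have h := ENNReal.toReal_mono (measure_ne_top μ Set.univ)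
      (measure_mono (Set.subset_univ B))
    simpa using h
  unfold VaR
  simp only [hset]
  by_cases h : β < (μ B).toReal
  · rw [if_pos h]
    have hS : {m : ℝ | (μ (if m < -γ then Set.univ else if m < ε then B
        else (∅ : Set Ω))).toReal ≤ β} = Set.Ici ε := by
      ext m
      simp only [Set.mem_setOf_eq, Set.mem_Ici]
      constructor
      · intro hm
        by_contra hlt
        push_neg at hlt
        by_cases h1 : m < -γ
        · rw [if_pos h1] at hm; simp at hm; linarith
        · rw [if_neg h1, if_pos hlt] at hm; linarith
      · intro hm
        rw [if_neg (by linarith), if_neg (by linarith)]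
        simpa using hβ0
    rw [hS, csInf_Ici]
  · rw [if_neg h]
    push_neg at h
    have hS : {m : ℝ | (μ (if m < -γ then Set.univ else if m < ε then B
        else (∅ : Set Ω))).toReal ≤ β} = Set.Ici (-γ) := by
      ext m
      simp only [Set.mem_setOf_eq, Set.mem_Ici]
      constructor
      · intro hm
        by_contra hlt
        push_neg at hlt
        rw [if_pos hlt] at hm
        simp at hm
        linarith
      · intro hm
        rw [if_neg (by linarith)]
        by_cases h2 : m < ε
        · rw [if_pos h2]; linarith
        · rw [if_neg h2]
          simp
          have : (0:ℝ) ≤ (μ B).toReal := ENNReal.toReal_nonneg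
          linarith
    rw [hS, csInf_Ici]

lemma TVaR_twoPoint (μ : Measure Ω) [IsProbabilityMeasure μ]
    (B : Set Ω) (ε γ : ℝ) (hε : 0 < ε) (hγ : 0 ≤ γ)
    (α : ℝ) (hp0 : 0 < (μ B).toReal) (hα1 : (μ B).toReal < α) (hα2 : α < 1) :
    TVaR μ α (fun ω => if ω ∈ B then -ε else γ)
      = ε / α * (μ B).toReal + γ * ((μ B).toReal / α - 1) := by
  set p := (μ B).toReal with hp
  have hα0 : 0 < α := lt_trans hp0 hα1
  have h1 : ∫ β in (0:ℝ)..α, VaR μ β (fun ω => if ω ∈ B then -ε else γ)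
      = ∫ β in (0:ℝ)..α, ((Set.indicator {x : ℝ | x ≤ p} (fun _ => ε + γ) β) + (-γ)) := by
    apply intervalIntegral.integral_congr_ae
    have hne : ∀ᵐ x : ℝ, x ≠ p := by
      rw [MeasureTheory.ae_iff]
      have : {x : ℝ | ¬ x ≠ p} = {p} := by ext x; simp
      rw [this]
      exact Real.volume_singleton
    filter_upwards [hne] with β hβp hβ
    rw [Set.uIoc_of_le hα0.le] at hβ
    rw [VaR_twoPoint μ B ε γ hε hγ β hβ.1.le (lt_of_le_of_lt hβ.2 hα2)]
    by_cases hb : β < p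
    · rw [if_pos hb, Set.indicator_of_mem (by simpa using hb.le)]
      ring
    · rw [if_neg hb, Set.indicator_of_notMem]
      · ring
      · simp only [Set.mem_setOf_eq]
        push_neg at hb ⊢
        exact lt_of_le_of_ne hb (Ne.symm hβp)
  unfold TVaR
  rw [h1, intervalIntegral.integral_add, intervalIntegral.integral_indicator
    ⟨hp0.le, hα1.le⟩]
  · simp only [intervalIntegral.integral_const, smul_eq_mul, sub_zero]
    field_simp
    ring
  · rw [intervalIntegrable_iff]
    exact (integrableOn_const measure_Ioc_lt_top.ne).indicator measurableSet_Iic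
  · exact intervalIntegrable_const

theorem TVaR_not_surplus_invariant
    (μ : Measure Ω) [IsProbabilityMeasure μ]
    (B : Set Ω) (hB : MeasurableSet B) (hB0 : 0 < μ B) (hB1 : μ B < 1)
    (ε γ : ℝ) (hε : 0 < ε) (hγ : 0 < γ)
    (α : ℝ) (hα1 : (μ B).toReal < α) (hα2 : α < 1)
    (X : Ω → ℝ) (hX : X = fun ω => if ω ∈ B then -ε else γ) :
    TVaR μ α X = ε / α * (μ B).toReal + γ * ((μ B).toReal / α - 1) ∧
    TVaR μ α (fun ω => min (X ω) 0) = ε / α * (μ B).toReal ∧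
    0 < ε / α * (μ B).toReal ∧
    (∃ γ₀ : ℝ, ∀ γ' ≥ γ₀,
      TVaR μ α (fun ω => if ω ∈ B then -ε else γ') ≤ 0) := by
  have hp0 : 0 < (μ B).toReal := ENNReal.toReal_pos hB0.ne' (measure_ne_top μ B)
  have hα0 : 0 < α := lt_trans hp0 hα1
  set p := (μ B).toReal with hp
  refine ⟨?_, ?_, ?_, ?_⟩
  · rw [hX]; exact TVaR_twoPoint μ B ε γ hε hγ.le α hp0 hα1 hα2
  · have hmin : (fun ω => min (X ω) 0) = fun ω => if ω ∈ B then -ε else (0:ℝ) := by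
      funext ω
      rw [hX]
      by_cases hω : ω ∈ B <;> simp [hω] <;> linarith
    rw [hmin]
    have := TVaR_twoPoint μ B ε 0 hε le_rfl α hp0 hα1 hα2
    rw [this]; ring
  · positivity
  · refine ⟨ε * p / (α - p), fun γ' hγ' => ?_⟩
    have hap : 0 < α - p := sub_pos.mpr hα1
    have hγ'0 : 0 ≤ γ' := le_trans (by positivity) hγ'
    rw [TVaR_twoPoint μ B ε γ' hε hγ'0 α hp0 hα1 hα2]
    have h1 : ε * p / (α - p) * (α - p) ≤ γ' * (α - p) :=
      mul_le_mul_of_nonneg_right hγ' hap.le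
    rw [div_mul_cancel₀ _ hap.ne'] at h1
    have heq : ε / α * p + γ' * (p / α - 1) = (ε * p - γ' * (α - p)) / α := by
      field_simp; ring
    rw [heq]
    apply div_nonpos_of_nonpos_of_nonneg _ hα0.le
    linarith
end

section
/- Let A ⊂ L^∞ be a surplus-invariant acceptance set and S = (S₀, S_T) a traded asset with S₀ > 0 and 0 ≤ S_T ∈ L^∞, S_T ≠ 0. Then the risk measure ρ_{A,S}(X) := inf{m ∈ ℝ : X + (m/S₀)·S_T ∈ A} is surplus invariant: ρ_{A,S}(X) = ρ_{A,S}(-X⁻) for every X ∈ L^∞ with ρ_{A,S}(X) ≥ 0. -/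
open MeasureTheory

variable {Ω : Type*} [MeasurableSpace Ω]

/-- The risk measure `ρ_{A,S}(X) = inf {m : X + (m/S₀)·S_T ∈ A}`, valued in
`[-∞,∞]` (the infimum over the empty set is `+∞`). -/
noncomputable def rhoAS (μ : Measure Ω) (A : Set (Lp ℝ ⊤ μ))
    (S0 : ℝ) (ST : Lp ℝ ⊤ μ) (X : Lp ℝ ⊤ μ) : EReal :=
  sInf ((fun m : ℝ => (m : EReal)) '' {m : ℝ | X + (m / S0) • ST ∈ A})

/-- In a lattice-ordered group, adding a nonnegative element does not change the
negative part truncation. -/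
lemma inf_zero_add_of_nonneg {G : Type*} [Lattice G] [AddCommGroup G]
    [CovariantClass G G (· + ·) (· ≤ ·)] (a s : G) (hs : 0 ≤ s) :
    ((a ⊓ 0) + s) ⊓ 0 = (a + s) ⊓ 0 := by
  rw [inf_add, zero_add, inf_assoc, inf_eq_right.mpr hs]

lemma smul_nonneg_Lp (μ : Measure Ω) (c : ℝ) (hc : 0 ≤ c)
    (ST : Lp ℝ ⊤ μ) (hST : 0 ≤ ST) : 0 ≤ c • ST := by
  rw [← Lp.coeFn_nonneg] at hST ⊢
  filter_upwards [Lp.coeFn_smul c ST, hST] with ω h1 h2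
  rw [h1]
  exact smul_nonneg hc h2

theorem rhoAS_surplus_invariant
    (μ : Measure Ω) [IsProbabilityMeasure μ]
    (A : Set (Lp ℝ ⊤ μ)) (hA : IsAcceptanceSet μ A) (hsi : SurplusInvariant μ A)
    (S0 : ℝ) (hS0 : 0 < S0) (ST : Lp ℝ ⊤ μ) (hST : 0 ≤ ST) (hSTne : ST ≠ 0)
    (X : Lp ℝ ⊤ μ) (hX : 0 ≤ rhoAS μ A S0 ST X) :
    rhoAS μ A S0 ST X = rhoAS μ A S0 ST (X ⊓ 0) := by
  have hset : {m : ℝ | X + (m / S0) • ST ∈ A}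
      = {m : ℝ | (X ⊓ 0) + (m / S0) • ST ∈ A} := by
    ext m
    constructor
    · intro hm
      -- m is nonnegative since the infimum is nonnegative
      have hminf : rhoAS μ A S0 ST X ≤ (m : EReal) :=
        sInf_le ⟨m, hm, rfl⟩
      have hm0 : (0 : ℝ) ≤ m := by exact_mod_cast hX.trans hminf
      have hc : 0 ≤ m / S0 := div_nonneg hm0 hS0.le
      have hs : 0 ≤ (m / S0) • ST := smul_nonneg_Lp μ _ hc ST hST
      refine hsi _ hm _ ?_
      have key : ((X ⊓ 0) + (m / S0) • ST) ⊓ 0 = (X + (m / S0) • ST) ⊓ 0 :=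
        inf_zero_add_of_nonneg X _ hs
      calc (-((X ⊓ 0) + (m / S0) • ST)) ⊔ 0
          = -(((X ⊓ 0) + (m / S0) • ST) ⊓ 0) := by rw [neg_inf, neg_zero]
        _ = -((X + (m / S0) • ST) ⊓ 0) := by rw [key]
        _ = (-(X + (m / S0) • ST)) ⊔ 0 := by rw [neg_inf, neg_zero]
    · intro hm
      exact hA.2.2 _ hm _ (add_le_add_left inf_le_left _)
  unfold rhoAS
  rw [hset]
end

section
/- Assume L¹(Ω,F,P) is separable. Let A ⊂ L^∞ be a coherent, surplus-invariant acceptance set that is σ(L^∞,L¹)-closed. Then there exists B ∈ F such that A = SPAN(B) = {X ∈ L^∞ : X·1_B ≥ 0 a.s.}. -/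
open MeasureTheory

variable {Ω : Type*} [MeasurableSpace Ω]

/-- The weak-star topology `σ(L^∞, L¹)` on `L^∞`: the topology induced by the
pairing maps `X ↦ (Z ↦ E[XZ])`, `Z ∈ L¹`. -/
noncomputable def weakStarTopology (μ : Measure Ω) : TopologicalSpace (Lp ℝ ⊤ μ) :=
  TopologicalSpace.induced
    (fun X : Lp ℝ ⊤ μ => fun Z : Lp ℝ 1 μ => ∫ ω, X ω * Z ω ∂μ)
    Pi.topologicalSpace

open Filter Topology
open scoped ENNReal NNReal

/-- Indicator of a measurable set as an element of `L^∞`. -/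
noncomputable def indL (μ : Measure Ω) [IsFiniteMeasure μ] (S : Set Ω)
    (hS : MeasurableSet S) : Lp ℝ ⊤ μ :=
  indicatorConstLp ⊤ hS (measure_ne_top μ S) (1 : ℝ)

lemma indL_coeFn (μ : Measure Ω) [IsFiniteMeasure μ] (S : Set Ω) (hS : MeasurableSet S) :
    ⇑(indL μ S hS) =ᵐ[μ] S.indicator (fun _ => (1 : ℝ)) :=
  indicatorConstLp_coeFn

/-- Membership in a weak-star closed set from convergence of all pairings. -/
lemma weakStar_mem_of_tendsto {μ : Measure Ω} {A : Set (Lp ℝ ⊤ μ)}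
    (hclosed : @IsClosed _ (weakStarTopology μ) A)
    {f : ℕ → Lp ℝ ⊤ μ} (hf : ∀ n, f n ∈ A) {X : Lp ℝ ⊤ μ}
    (h : ∀ Z : Lp ℝ 1 μ, Tendsto (fun n => ∫ ω, (f n) ω * Z ω ∂μ) atTop
      (𝓝 (∫ ω, X ω * Z ω ∂μ))) : X ∈ A := by
  letI := weakStarTopology μ
  have ht : Tendsto f atTop (𝓝 X) := ?_
  · exact hclosed.mem_of_tendsto ht (Filter.Eventually.of_forall hf)
  have hn : @nhds _ (weakStarTopology μ) X =
      Filter.comap (fun X : Lp ℝ ⊤ μ => fun Z : Lp ℝ 1 μ => ∫ ω, X ω * Z ω ∂μ)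
        (𝓝 (fun Z : Lp ℝ 1 μ => ∫ ω, X ω * Z ω ∂μ)) :=
    nhds_induced _ _
  rw [show (𝓝 X : Filter (Lp ℝ ⊤ μ)) = @nhds _ (weakStarTopology μ) X from rfl, hn,
    Filter.tendsto_comap_iff]
  rw [tendsto_pi_nhds]
  intro Z
  exact h Z

theorem coherent_surplusInvariant_is_SPAN
    (μ : Measure Ω) [IsProbabilityMeasure μ]
    [TopologicalSpace.SeparableSpace (Lp ℝ 1 μ)]
    (A : Set (Lp ℝ ⊤ μ)) (hA : IsAcceptanceSet μ A)
    (hconv : Convex ℝ A) (hcone : ∀ c : ℝ, 0 < c → ∀ X ∈ A, c • X ∈ A)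
    (hsi : SurplusInvariant μ A)
    (hclosed : @IsClosed _ (weakStarTopology μ) A) :
    ∃ B : Set Ω, MeasurableSet B ∧
      A = {X : Lp ℝ ⊤ μ | ∀ᵐ ω ∂μ, ω ∈ B → 0 ≤ X ω} := by
  classical
  obtain ⟨hne, -, hup⟩ := hA
  -- The negative of the negative part of an acceptable position is acceptable.
  have hnegA : ∀ X ∈ A, (-((-X) ⊔ 0)) ∈ A := by
    intro X hX
    refine hsi X hX _ ?_
    rw [neg_neg]
    exact sup_eq_left.mpr le_sup_right
  -- Key "downward" lemma: acceptability only depends on an a.e. bound on the negative part.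
  have key : ∀ X ∈ A, ∀ Y : Lp ℝ ⊤ μ,
      (∀ᵐ ω ∂μ, max (-(Y ω)) 0 ≤ max (-(X ω)) 0) → Y ∈ A := by
    intro X hX Y hle
    refine hup _ (hnegA X hX) Y ?_
    rw [← Lp.coeFn_le]
    filter_upwards [Lp.coeFn_neg ((-X) ⊔ (0 : Lp ℝ ⊤ μ)), Lp.coeFn_sup (-X) (0 : Lp ℝ ⊤ μ),
      Lp.coeFn_neg X, Lp.coeFn_zero (E := ℝ) (p := ⊤) (μ := μ), hle] with ω e1 e2 e3 e4 e5
    have hW : (-((-X) ⊔ 0) : Lp ℝ ⊤ μ) ω = -(max (-(X ω)) 0) := by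
      rw [e1, Pi.neg_apply, e2, Pi.sup_apply, e3, Pi.neg_apply, e4, Pi.zero_apply]
    rw [hW]
    have h2 : -(max (-(Y ω)) 0) ≤ Y ω := by
      have := le_max_left (-(Y ω)) 0
      linarith
    linarith
  -- A is closed under addition.
  have hadd : ∀ X ∈ A, ∀ Y ∈ A, X + Y ∈ A := by
    intro X hX Y hY
    have hmid : (1 / 2 : ℝ) • X + (1 / 2 : ℝ) • Y ∈ A :=
      hconv hX hY (by norm_num) (by norm_num) (by norm_num)
    have h2 := hcone 2 (by norm_num) _ hmid
    have heq : (2 : ℝ) • ((1 / 2 : ℝ) • X + (1 / 2 : ℝ) • Y) = X + Y := by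
      rw [smul_add, smul_smul, smul_smul]
      norm_num
    rwa [heq] at h2
  -- 0 ∈ A.
  obtain ⟨X0, hX0⟩ := hne
  have hW0 : (-((-X0) ⊔ 0)) ∈ A := hnegA X0 hX0
  have h0 : (0 : Lp ℝ ⊤ μ) ∈ A := by
    refine weakStar_mem_of_tendsto hclosed
      (f := fun n : ℕ => (1 / (n + 1) : ℝ) • (-((-X0) ⊔ 0)))
      (fun n => hcone _ (by positivity) _ hW0) ?_
    intro Z
    have hI : ∀ n : ℕ, ∫ ω, ((1 / (n + 1) : ℝ) • (-((-X0) ⊔ 0)) : Lp ℝ ⊤ μ) ω * Z ω ∂μ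
        = (1 / (n + 1) : ℝ) * ∫ ω, (-((-X0) ⊔ 0) : Lp ℝ ⊤ μ) ω * Z ω ∂μ := by
      intro n
      rw [← integral_const_mul]
      refine integral_congr_ae ?_
      filter_upwards [Lp.coeFn_smul (1 / (n + 1) : ℝ) (-((-X0) ⊔ 0) : Lp ℝ ⊤ μ)] with ω hω
      rw [hω, Pi.smul_apply, smul_eq_mul, mul_assoc]
    have h0' : ∫ ω, (0 : Lp ℝ ⊤ μ) ω * Z ω ∂μ = 0 := by
      rw [← integral_zero Ω ℝ (μ := μ)]
      refine integral_congr_ae ?_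
      filter_upwards [Lp.coeFn_zero (E := ℝ) (p := ⊤) (μ := μ)] with ω hω
      rw [hω, Pi.zero_apply, zero_mul]
    simp only [hI, h0']
    have := tendsto_one_div_add_atTop_nhds_zero_nat.mul_const
      (∫ ω, (-((-X0) ⊔ 0) : Lp ℝ ⊤ μ) ω * Z ω ∂μ)
    rwa [zero_mul] at this
  -- The family of "fully rejectable" sets.
  set 𝒮 : Set (Set Ω) := {S | ∃ hS : MeasurableSet S, -(indL μ S hS) ∈ A} with h𝒮def
  have hempty : (∅ : Set Ω) ∈ 𝒮 := by
    refine ⟨MeasurableSet.empty, ?_⟩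
    have : indL μ (∅ : Set Ω) MeasurableSet.empty = 0 := indicatorConstLp_empty
    rw [this, neg_zero]
    exact h0
  -- 𝒮 is closed under binary unions.
  have hunion : ∀ S ∈ 𝒮, ∀ T ∈ 𝒮, S ∪ T ∈ 𝒮 := by
    rintro S ⟨hS, hSA⟩ T ⟨hT, hTA⟩
    refine ⟨hS.union hT, ?_⟩
    have hsum : (-(indL μ S hS) + -(indL μ T hT)) ∈ A := hadd _ hSA _ hTA
    refine key _ hsum _ ?_
    filter_upwards [Lp.coeFn_neg (indL μ (S ∪ T) (hS.union hT)),
      indL_coeFn μ (S ∪ T) (hS.union hT),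
      Lp.coeFn_add (-(indL μ S hS)) (-(indL μ T hT)),
      Lp.coeFn_neg (indL μ S hS), Lp.coeFn_neg (indL μ T hT),
      indL_coeFn μ S hS, indL_coeFn μ T hT] with ω e1 e2 e3 e4 e5 e6 e7
    have hY : (-(indL μ (S ∪ T) (hS.union hT)) : Lp ℝ ⊤ μ) ω
        = -((S ∪ T).indicator (fun _ => (1 : ℝ)) ω) := by
      rw [e1, Pi.neg_apply, e2]
    have hX : ((-(indL μ S hS) + -(indL μ T hT)) : Lp ℝ ⊤ μ) ω
        = -(S.indicator (fun _ => (1 : ℝ)) ω) + -(T.indicator (fun _ => (1 : ℝ)) ω) := by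
      rw [e3, Pi.add_apply, e4, Pi.neg_apply, e6, e5, Pi.neg_apply, e7]
    rw [hY, hX]
    refine max_le_max ?_ le_rfl
    have hle : (S ∪ T).indicator (fun _ => (1 : ℝ)) ω
        ≤ S.indicator (fun _ => (1 : ℝ)) ω + T.indicator (fun _ => (1 : ℝ)) ω := by
      by_cases hs : ω ∈ S <;> by_cases ht : ω ∈ T <;>
        simp [Set.indicator_apply, hs, ht]
    linarith
  -- the supremum of measures of sets in 𝒮
  set m : Set Ω → ℝ := fun S => (μ S).toReal with hmdef
  have hbdd : BddAbove (m '' 𝒮) := by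
    refine ⟨1, ?_⟩
    rintro r ⟨S, -, rfl⟩
    have h1 : μ S ≤ 1 := prob_le_one
    calc m S ≤ (1 : ℝ≥0∞).toReal := ENNReal.toReal_mono (by simp) h1
      _ = 1 := by simp
  have hne𝒮 : (m '' 𝒮).Nonempty := ⟨m ∅, ⟨∅, hempty, rfl⟩⟩
  set s : ℝ := sSup (m '' 𝒮) with hsdef
  have hle_s : ∀ S ∈ 𝒮, m S ≤ s := fun S hS => le_csSup hbdd ⟨S, hS, rfl⟩
  have hchoice : ∀ n : ℕ, ∃ S ∈ 𝒮, s - 1 / (n + 1) < m S := by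
    intro n
    obtain ⟨r, ⟨S, hS, rfl⟩, hr⟩ :=
      exists_lt_of_lt_csSup hne𝒮 (show s - 1 / (n + 1 : ℝ) < s by
        have : (0 : ℝ) < 1 / (n + 1) := by positivity
        linarith)
    exact ⟨S, hS, hr⟩
  choose S hS𝒮 hSgt using hchoice
  -- partial unions
  set U : ℕ → Set Ω := fun n => Nat.rec (S 0) (fun k Uk => Uk ∪ S (k + 1)) n with hUdef
  have hU𝒮 : ∀ n, U n ∈ 𝒮 := by
    intro n
    induction n with
    | zero => exact hS𝒮 0
    | succ k ih => exact hunion _ ih _ (hS𝒮 (k + 1))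
  have hUmeas : ∀ n, MeasurableSet (U n) := fun n => (hU𝒮 n).choose
  have hUmono : Monotone U := monotone_nat_of_le_succ fun n => Set.subset_union_left
  have hSsubU : ∀ n, S n ⊆ U n := by
    intro n
    cases n with
    | zero => exact subset_rfl
    | succ k => exact Set.subset_union_right
  set Sinf : Set Ω := ⋃ n, S n with hSinfdef
  have hUsub : ∀ n, U n ⊆ Sinf := by
    intro n
    induction n with
    | zero => exact Set.subset_iUnion S 0
    | succ k ih => exact Set.union_subset ih (Set.subset_iUnion S (k + 1))
  have hSinf_meas : MeasurableSet Sinf := MeasurableSet.iUnion fun n => (hS𝒮 n).choose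
  -- Sinf ∈ 𝒮, using weak* closedness.
  have hSinfA : Sinf ∈ 𝒮 := by
    refine ⟨hSinf_meas, ?_⟩
    refine weakStar_mem_of_tendsto hclosed
      (f := fun n => -(indL μ (U n) (hUmeas n))) (fun n => (hU𝒮 n).choose_spec) ?_
    intro Z
    have hcongr : ∀ n, ∫ ω, (-(indL μ (U n) (hUmeas n)) : Lp ℝ ⊤ μ) ω * Z ω ∂μ
        = ∫ ω, -((U n).indicator (fun _ => (1 : ℝ)) ω) * Z ω ∂μ := by
      intro n
      refine integral_congr_ae ?_
      filter_upwards [Lp.coeFn_neg (indL μ (U n) (hUmeas n)),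
        indL_coeFn μ (U n) (hUmeas n)] with ω e1 e2
      rw [e1, Pi.neg_apply, e2]
    have hcongr' : ∫ ω, (-(indL μ Sinf hSinf_meas) : Lp ℝ ⊤ μ) ω * Z ω ∂μ
        = ∫ ω, -(Sinf.indicator (fun _ => (1 : ℝ)) ω) * Z ω ∂μ := by
      refine integral_congr_ae ?_
      filter_upwards [Lp.coeFn_neg (indL μ Sinf hSinf_meas),
        indL_coeFn μ Sinf hSinf_meas] with ω e1 e2
      rw [e1, Pi.neg_apply, e2]
    rw [hcongr']
    refine Tendsto.congr (fun n => (hcongr n).symm) ?_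
    refine tendsto_integral_of_dominated_convergence (fun ω => ‖Z ω‖)
      (fun n => ?_) ?_ (fun n => ?_) ?_
    · exact (((measurable_const.indicator (hUmeas n)).neg).aestronglyMeasurable).mul
        (Lp.aestronglyMeasurable Z)
    · exact (L1.integrable_coeFn Z).norm
    · refine Filter.Eventually.of_forall fun ω => ?_
      rw [norm_mul, norm_neg]
      have hind : ‖(U n).indicator (fun _ => (1 : ℝ)) ω‖ ≤ 1 := by
        by_cases hω : ω ∈ U n <;> simp [Set.indicator_apply, hω]
      calc ‖(U n).indicator (fun _ => (1 : ℝ)) ω‖ * ‖Z ω‖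
          ≤ 1 * ‖Z ω‖ := by
            exact mul_le_mul_of_nonneg_right hind (norm_nonneg _)
        _ = ‖Z ω‖ := one_mul _
    · refine Filter.Eventually.of_forall fun ω => ?_
      by_cases hω : ω ∈ Sinf
      · obtain ⟨k, hk⟩ := Set.mem_iUnion.mp hω
        refine tendsto_atTop_of_eventually_const (i₀ := k) fun n hn => ?_
        rw [Set.indicator_of_mem (hUmono hn (hSsubU k hk)),
          Set.indicator_of_mem hω]
      · have : (fun n => -((U n).indicator (fun _ => (1 : ℝ)) ω) * Z ω)
            = fun _ => -(Sinf.indicator (fun _ => (1 : ℝ)) ω) * Z ω := by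
          funext n
          rw [Set.indicator_of_notMem (fun h => hω (hUsub n h)),
            Set.indicator_of_notMem hω]
        rw [this]
        exact tendsto_const_nhds
  -- Sinf has maximal measure.
  have hsle : s ≤ m Sinf := by
    by_contra hcon
    push_neg at hcon
    obtain ⟨n, hn⟩ := exists_nat_one_div_lt (show (0 : ℝ) < s - m Sinf by linarith)
    have h1 : m (S n) ≤ m Sinf :=
      ENNReal.toReal_mono (measure_ne_top μ _) (measure_mono (Set.subset_iUnion S n))
    have h2 := hSgt n
    have : (1 : ℝ) / (n + 1) < s - m Sinf := hn
    linarith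
  -- The candidate set.
  refine ⟨Sinfᶜ, hSinf_meas.compl, ?_⟩
  ext X
  simp only [Set.mem_setOf_eq]
  constructor
  · -- A ⊆ SPAN
    intro hX
    by_contra hcon
    have hXm : AEMeasurable (⇑X) μ := (Lp.aestronglyMeasurable X).aemeasurable
    set X' : Ω → ℝ := hXm.mk (⇑X) with hX'def
    have hXX' : ⇑X =ᵐ[μ] X' := hXm.ae_eq_mk
    have hX'meas : Measurable X' := hXm.measurable_mk
    have hcon' : ¬ ∀ᵐ ω ∂μ, ω ∈ Sinfᶜ → 0 ≤ X' ω := by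
      intro hc
      refine hcon ?_
      filter_upwards [hc, hXX'] with ω h1 h2 hmem
      rw [h2]
      exact h1 hmem
    rw [ae_iff] at hcon'
    have hset : {ω | ¬(ω ∈ Sinfᶜ → 0 ≤ X' ω)}
        ⊆ ⋃ n : ℕ, Sinfᶜ ∩ {ω | X' ω < -(1 / (n + 1))} := by
      intro ω hω
      simp only [Set.mem_setOf_eq, Classical.not_imp, not_le] at hω
      obtain ⟨hω1, hω2⟩ := hω
      obtain ⟨n, hn⟩ := exists_nat_one_div_lt (show (0 : ℝ) < -(X' ω) by linarith)
      exact Set.mem_iUnion.mpr ⟨n, hω1, by simp only [Set.mem_setOf_eq]; linarith⟩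
    have hUnion_ne : μ (⋃ n : ℕ, Sinfᶜ ∩ {ω | X' ω < -(1 / (n + 1 : ℝ))}) ≠ 0 := by
      intro h
      exact hcon' (measure_mono_null hset h)
    have hex : ∃ n : ℕ, μ (Sinfᶜ ∩ {ω | X' ω < -(1 / (n + 1 : ℝ))}) ≠ 0 := by
      by_contra hall
      push_neg at hall
      exact hUnion_ne (measure_iUnion_null hall)
    obtain ⟨n, hn⟩ := hex
    set ε : ℝ := 1 / (n + 1) with hεdef
    have hε : (0 : ℝ) < ε := by positivity
    set T : Set Ω := Sinfᶜ ∩ {ω | X' ω < -ε} with hTdef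
    have hTmeas : MeasurableSet T :=
      hSinf_meas.compl.inter (measurableSet_lt hX'meas measurable_const)
    have hT𝒮 : T ∈ 𝒮 := by
      refine ⟨hTmeas, ?_⟩
      have hY : (-(ε • indL μ T hTmeas)) ∈ A := by
        refine key X hX _ ?_
        filter_upwards [Lp.coeFn_neg (ε • indL μ T hTmeas),
          Lp.coeFn_smul ε (indL μ T hTmeas), indL_coeFn μ T hTmeas, hXX']
          with ω e1 e2 e3 e4
        have hYω : (-(ε • indL μ T hTmeas) : Lp ℝ ⊤ μ) ω
            = -(ε * T.indicator (fun _ => (1 : ℝ)) ω) := by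
          rw [e1, Pi.neg_apply, e2, Pi.smul_apply, e3, smul_eq_mul]
        rw [hYω, neg_neg]
        by_cases hω : ω ∈ T
        · have hXω : X ω < -ε := by
            rw [e4]
            exact hω.2
          rw [Set.indicator_of_mem hω, mul_one]
          have h1 : ε ≤ -(X ω) := by linarith
          have h2 : -(X ω) ≤ max (-(X ω)) 0 := le_max_left _ _
          calc max ε 0 = ε := max_eq_left hε.le
            _ ≤ max (-(X ω)) 0 := by linarith
        · rw [Set.indicator_of_notMem hω, mul_zero]
          simp only [max_self]
          exact le_max_right _ _
      have hY2 := hcone ε⁻¹ (by positivity) _ hY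
      have heq : (ε⁻¹ : ℝ) • (-(ε • indL μ T hTmeas)) = -(indL μ T hTmeas) := by
        rw [smul_neg, smul_smul, inv_mul_cancel₀ hε.ne', one_smul]
      rwa [heq] at hY2
    have hTU : Sinf ∪ T ∈ 𝒮 := hunion _ hSinfA _ hT𝒮
    have hle := hle_s _ hTU
    have hdisj : Disjoint Sinf T := by
      rw [Set.disjoint_left]
      intro ω hω hωT
      exact hωT.1 hω
    have hμadd : μ (Sinf ∪ T) = μ Sinf + μ T := measure_union hdisj hTmeas
    have hm_add : m (Sinf ∪ T) = m Sinf + m T := by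
      rw [hmdef]
      simp only
      rw [hμadd, ENNReal.toReal_add (measure_ne_top μ _) (measure_ne_top μ _)]
    have hTpos : 0 < m T := ENNReal.toReal_pos hn (measure_ne_top μ T)
    rw [hm_add] at hle
    linarith
  · -- SPAN ⊆ A
    intro hX
    -- an a.e. bound on X
    set K : ℝ≥0∞ := eLpNormEssSup (⇑X) μ with hKdef
    have hKlt : K ≠ ∞ := by
      have := Lp.eLpNorm_lt_top X
      rw [eLpNorm_exponent_top] at this
      exact this.ne
    set C : ℝ := K.toReal with hCdef
    have habs : ∀ᵐ ω ∂μ, |X ω| ≤ C := by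
      filter_upwards [ae_le_eLpNormEssSup (f := ⇑X) (μ := μ)] with ω hω
      have h1 : ((‖X ω‖₊ : ℝ≥0∞)).toReal ≤ K.toReal := ENNReal.toReal_mono hKlt hω
      rwa [ENNReal.coe_toReal, coe_nnnorm, Real.norm_eq_abs] at h1
    set c : ℝ := C + 1 with hcdef
    have hC0 : 0 ≤ C := ENNReal.toReal_nonneg
    have hc : 0 < c := by positivity
    have hW : (c • (-(indL μ Sinf hSinf_meas))) ∈ A :=
      hcone c hc _ hSinfA.choose_spec
    refine key _ hW X ?_
    filter_upwards [hX, habs, Lp.coeFn_smul c (-(indL μ Sinf hSinf_meas) : Lp ℝ ⊤ μ),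
      Lp.coeFn_neg (indL μ Sinf hSinf_meas), indL_coeFn μ Sinf hSinf_meas]
      with ω h1 h2 e1 e2 e3
    have hWω : ((c • (-(indL μ Sinf hSinf_meas))) : Lp ℝ ⊤ μ) ω
        = c * (-(Sinf.indicator (fun _ => (1 : ℝ)) ω)) := by
      rw [e1, Pi.smul_apply, e2, Pi.neg_apply, e3, smul_eq_mul]
    rw [hWω]
    by_cases hω : ω ∈ Sinf
    · rw [Set.indicator_of_mem hω, mul_neg, mul_one, neg_neg]
      have hle1 : -(X ω) ≤ c := by
        have := neg_abs_le (X ω)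
        linarith
      exact max_le_max hle1 le_rfl
    · have h0X : 0 ≤ X ω := h1 hω
      rw [Set.indicator_of_notMem hω, mul_neg, mul_zero, neg_zero]
      have hmax : max (-(X ω)) 0 = 0 := max_eq_right (by linarith)
      rw [hmax]
      simp
end

section
/- An acceptance set A ⊂ ℝ^N (with the componentwise order) is surplus invariant if and only if for every x ∈ A and every choice of signs δ ∈ {0,1}^N, the vector (δ₁x₁, …, δ_N x_N) belongs to A. -/
/-- An acceptance set in `ℝ^N` (componentwise order): nonempty, proper, upward closed. -/
def IsAcceptanceSetFin {N : ℕ} (A : Set (Fin N → ℝ)) : Prop :=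
  A.Nonempty ∧ A ≠ Set.univ ∧ ∀ x ∈ A, ∀ y : Fin N → ℝ, x ≤ y → y ∈ A

/-- Surplus invariance in `ℝ^N`: `x ∈ A` and `y⁻ = x⁻` (componentwise) imply `y ∈ A`. -/
def SurplusInvariantFin {N : ℕ} (A : Set (Fin N → ℝ)) : Prop :=
  ∀ x ∈ A, ∀ y : Fin N → ℝ, (fun i => max (-(y i)) 0) = (fun i => max (-(x i)) 0) → y ∈ A

theorem surplusInvariantFin_iff
    {N : ℕ} (A : Set (Fin N → ℝ)) (hA : IsAcceptanceSetFin A) :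
    SurplusInvariantFin A ↔
      ∀ x ∈ A, ∀ δ : Fin N → ℝ, (∀ i, δ i = 0 ∨ δ i = 1) →
        (fun i => δ i * x i) ∈ A := by
  obtain ⟨-, -, hup⟩ := hA
  constructor
  · intro hsi x hx δ hδ
    have hy : (fun i => min (x i) (δ i * x i)) ∈ A := by
      apply hsi x hx
      funext i
      rcases hδ i with h | h
      · rw [h, zero_mul]
        rcases le_or_gt (x i) 0 with hx0 | hx0
        · rw [min_eq_left hx0]
        · rw [min_eq_right hx0.le, max_eq_right (neg_nonpos.2 hx0.le),
            max_eq_right (by norm_num : (-(0:ℝ)) ≤ 0)]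
      · rw [h, one_mul, min_self]
    exact hup _ hy _ fun i => min_le_right _ _
  · intro h x hx y hy
    set δ : Fin N → ℝ := fun i => if x i < 0 then 1 else 0 with hδdef
    have hδ : ∀ i, δ i = 0 ∨ δ i = 1 := by
      intro i; by_cases hi : x i < 0 <;> simp [hδdef, hi]
    have hmem := h x hx δ hδ
    apply hup _ hmem
    intro i
    have hyi := congrFun hy i
    by_cases hi : x i < 0
    · have : max (-(y i)) 0 = -(x i) := by rw [hyi, max_eq_left (by linarith)]
      have h1 : -(y i) ≤ -(x i) := this ▸ le_max_left _ _
      simp only [hδdef, hi, if_pos, one_mul]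
      linarith
    · push_neg at hi
      have : max (-(x i)) 0 = 0 := max_eq_right (by linarith)
      rw [this] at hyi
      have : -(y i) ≤ 0 := hyi ▸ le_max_left _ _
      simp only [hδdef, if_neg (not_lt.2 hi), zero_mul]
      linarith
end

section
/- Let A ⊂ ℝ^N be a closed, convex, surplus-invariant acceptance set and set v_j := inf_{x ∈ A} x_j. If v_{j₁} = … = v_{j_R} = -∞ for distinct indices j₁,…,j_R, then Σ_{i=1}^R x_{j_i} e_{j_i} ∈ A for all real numbers x_{j₁},…,x_{j_R}, where e_j are the standard basis vectors. -/
theorem unbounded_components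
    {N : ℕ} (A : Set (Fin N → ℝ)) (hA : IsAcceptanceSetFin A)
    (hconv : Convex ℝ A) (hcl : IsClosed A) (hsi : SurplusInvariantFin A)
    (R : ℕ) (j : Fin R → Fin N) (hj : Function.Injective j)
    (hunb : ∀ i : Fin R, ∀ c : ℝ, ∃ x ∈ A, x (j i) < c)
    (cvals : Fin R → ℝ) (y : Fin N → ℝ)
    (hy1 : ∀ i : Fin R, y (j i) = cvals i)
    (hy2 : ∀ k : Fin N, k ∉ Set.range j → y k = 0) :
    y ∈ A := by
  obtain ⟨hne, _, hup⟩ := hA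
  -- for any x ∈ A, -x⁻ ∈ A
  have hneg : ∀ x ∈ A, (fun k => -max (-(x k)) 0) ∈ A := by
    intro x hx
    apply hsi x hx
    funext k
    simp [max_assoc]
  -- 0 ∈ A
  have h0 : (0 : Fin N → ℝ) ∈ A := by
    obtain ⟨x, hx⟩ := hne
    refine hup _ (hneg x hx) 0 fun k => ?_
    simp [neg_nonpos, le_max_right]
  -- single coordinate vectors
  have hsingle : ∀ (i : Fin R) (c : ℝ), (fun k => if k = j i then c else 0) ∈ A := by
    intro i c
    obtain ⟨x, hx, hxc⟩ := hunb i (min c 0)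
    refine hup _ (hneg x hx) _ fun k => ?_
    show -(max (-(x k)) 0) ≤ if k = j i then c else 0
    by_cases hk : k = j i
    · rw [if_pos hk, hk]
      have hx0 : x (j i) < 0 := lt_of_lt_of_le hxc (min_le_right c 0)
      have : max (-(x (j i))) 0 = -(x (j i)) := max_eq_left (by linarith)
      rw [this, neg_neg]
      exact le_of_lt (lt_of_lt_of_le hxc (min_le_left c 0))
    · rw [if_neg hk]
      simp [neg_nonpos, le_max_right]
  rcases Nat.eq_zero_or_pos R with hR | hR
  · subst hR
    have : y = 0 := by
      funext k
      exact hy2 k (by simp [Set.range_eq_empty])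
    rw [this]; exact h0
  · have hRne : (R : ℝ) ≠ 0 := Nat.cast_ne_zero.mpr hR.ne'
    have key : y = ∑ i : Fin R, (1 / (R : ℝ)) •
        (fun k => if k = j i then (R : ℝ) * cvals i else 0) := by
      funext k
      simp only [Finset.sum_apply, Pi.smul_apply, smul_eq_mul]
      have heq : ∀ i : Fin R,
          (1 / (R : ℝ)) * (if k = j i then (R : ℝ) * cvals i else 0)
          = if k = j i then cvals i else 0 := by
        intro i
        by_cases hk : k = j i
        · rw [if_pos hk, if_pos hk]; field_simp
        · rw [if_neg hk, if_neg hk, mul_zero]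
      rw [Finset.sum_congr rfl fun i _ => heq i]
      by_cases hk : k ∈ Set.range j
      · obtain ⟨i₀, hi₀⟩ := hk
        rw [Finset.sum_eq_single i₀]
        · rw [if_pos hi₀.symm, ← hi₀, hy1]
        · intro b _ hb
          rw [if_neg]
          intro h; exact hb (hj (hi₀.trans h)).symm
        · intro h; exact absurd (Finset.mem_univ i₀) h
      · rw [hy2 k hk]
        symm
        apply Finset.sum_eq_zero
        intro i _
        rw [if_neg]
        intro h; exact hk ⟨i, h.symm⟩
    rw [key]
    apply hconv.sum_mem
    · intro i _; positivity
    · rw [Finset.sum_const, Finset.card_univ, Fintype.card_fin, nsmul_eq_mul]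
      field_simp
    · intro i _; exact hsingle i _
end

section
/- Let A ⊂ ℝ^N be a closed, convex, surplus-invariant acceptance set with v_j := inf_{x ∈ A} x_j finite for j = 1,…,K and v_j = -∞ for j = K+1,…,N (1 ≤ K ≤ N). Let w := (v₁,…,v_K,0,…,0). Then the closed conic hull of A − w equals ℝ^K₊ × ℝ^{N−K}. -/
/-- The conic hull of a set: the smallest convex cone (closed under addition is implied by
convexity plus positive scalar multiplication) containing it. -/
def coneHull {E : Type*} [AddCommMonoid E] [Module ℝ E] (S : Set E) : Set E :=
  ⋂₀ {C : Set E | S ⊆ C ∧ Convex ℝ C ∧ ∀ c : ℝ, 0 < c → ∀ x ∈ C, c • x ∈ C}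

namespace ConeAux

variable {E : Type*} [AddCommMonoid E] [Module ℝ E]

lemma subset_coneHull (S : Set E) : S ⊆ coneHull S := fun x hx =>
  Set.mem_sInter.2 fun _ hC => hC.1 hx

lemma coneHull_convex (S : Set E) : Convex ℝ (coneHull S) :=
  convex_sInter fun _ hC => hC.2.1

lemma coneHull_smul (S : Set E) {c : ℝ} (hc : 0 < c) {x : E} (hx : x ∈ coneHull S) :
    c • x ∈ coneHull S :=
  Set.mem_sInter.2 fun C hC => hC.2.2 c hc x (Set.mem_sInter.1 hx C hC)

lemma coneHull_subset {S C : Set E} (hSC : S ⊆ C) (hconv : Convex ℝ C)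
    (hsmul : ∀ c : ℝ, 0 < c → ∀ x ∈ C, c • x ∈ C) : coneHull S ⊆ C :=
  Set.sInter_subset_of_mem ⟨hSC, hconv, hsmul⟩

end ConeAux

theorem closed_conic_hull_of_surplusInvariant
    {N : ℕ} (K : ℕ) (hK1 : 1 ≤ K) (hKN : K ≤ N)
    (A : Set (Fin N → ℝ)) (hA : IsAcceptanceSetFin A)
    (hconv : Convex ℝ A) (hcl : IsClosed A) (hsi : SurplusInvariantFin A)
    (hbdd : ∀ j : Fin N, (j : ℕ) < K → BddBelow ((fun x : Fin N → ℝ => x j) '' A))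
    (hunb : ∀ j : Fin N, K ≤ (j : ℕ) → ¬ BddBelow ((fun x : Fin N → ℝ => x j) '' A))
    (w : Fin N → ℝ)
    (hw : ∀ j : Fin N, w j =
      if (j : ℕ) < K then sInf ((fun x : Fin N → ℝ => x j) '' A) else 0) :
    closure (coneHull ((fun x : Fin N → ℝ => x - w) '' A)) =
      {x : Fin N → ℝ | ∀ j : Fin N, (j : ℕ) < K → 0 ≤ x j} := by
  classical
  set S : Set (Fin N → ℝ) := (fun x : Fin N → ℝ => x - w) '' A with hS
  set C : Set (Fin N → ℝ) := closure (coneHull S) with hCdef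
  set P : Set (Fin N → ℝ) := {x | ∀ j : Fin N, (j : ℕ) < K → 0 ≤ x j} with hPdef
  -- P is a closed convex cone
  have hPconv : Convex ℝ P := by
    intro x hx y hy a b ha hb hab j hj
    have h1 := hx j hj
    have h2 := hy j hj
    have hco : (a • x + b • y) j = a * x j + b * y j := rfl
    show 0 ≤ (a • x + b • y) j
    rw [hco]
    positivity
  have hPsmul : ∀ c : ℝ, 0 < c → ∀ x ∈ P, c • x ∈ P := by
    intro c hc x hx j hj
    have hco : (c • x) j = c * x j := rfl
    rw [hco]
    exact mul_nonneg hc.le (hx j hj)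
  have hPclosed : IsClosed P := by
    have hP2 : P = ⋂ j : Fin N, {x : Fin N → ℝ | (j : ℕ) < K → 0 ≤ x j} := by
      ext x; simp [hPdef, Set.mem_iInter]
    rw [hP2]
    refine isClosed_iInter fun j => ?_
    by_cases h : (j : ℕ) < K
    · simp only [h, forall_true_left]
      exact isClosed_le continuous_const (continuous_apply j)
    · simp only [h]
      simpa using isClosed_univ
  have hSP : S ⊆ P := by
    rintro _ ⟨a, haA, rfl⟩ j hj
    have hw' : w j = sInf ((fun x : Fin N → ℝ => x j) '' A) := by
      rw [hw j, if_pos hj]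
    have hle : w j ≤ a j := hw' ▸ csInf_le (hbdd j hj) ⟨a, haA, rfl⟩
    simpa using sub_nonneg.2 hle
  have hsub : C ⊆ P :=
    closure_minimal (ConeAux.coneHull_subset hSP hPconv hPsmul) hPclosed
  -- C is a closed convex cone containing 0
  have hCsmul : ∀ c : ℝ, 0 < c → ∀ x ∈ C, c • x ∈ C := fun c hc x hx =>
    map_mem_closure (continuous_const_smul c) hx
      (fun y hy => ConeAux.coneHull_smul S hc hy)
  have hCconv : Convex ℝ C := (ConeAux.coneHull_convex S).closure
  have hCadd : ∀ x ∈ C, ∀ y ∈ C, x + y ∈ C := by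
    intro x hx y hy
    have hmid : (1/2 : ℝ) • x + (1/2 : ℝ) • y ∈ C :=
      hCconv hx hy (by norm_num) (by norm_num) (by norm_num)
    have h2 := hCsmul 2 (by norm_num) _ hmid
    have heq : (2 : ℝ) • ((1/2 : ℝ) • x + (1/2 : ℝ) • y) = x + y := by
      rw [smul_add, smul_smul, smul_smul]; norm_num
    rwa [heq] at h2
  obtain ⟨a0, ha0⟩ := hA.1
  have h0tt : Filter.Tendsto (fun n : ℕ => (1 / ((n : ℝ) + 1) : ℝ)) Filter.atTop (nhds 0) :=
    tendsto_one_div_add_atTop_nhds_zero_nat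
  have hzero : (0 : Fin N → ℝ) ∈ C := by
    have hmem : ∀ n : ℕ, (1 / ((n : ℝ) + 1) : ℝ) • (a0 - w) ∈ coneHull S := fun n =>
      ConeAux.coneHull_smul S (by positivity) (ConeAux.subset_coneHull S ⟨a0, ha0, rfl⟩)
    have htt : Filter.Tendsto (fun n : ℕ => (1 / ((n : ℝ) + 1) : ℝ) • (a0 - w))
        Filter.atTop (nhds 0) := by
      simpa using h0tt.smul_const (a0 - w)
    exact mem_closure_of_tendsto htt (Filter.Eventually.of_forall hmem)
  have hCsmul' : ∀ c : ℝ, 0 ≤ c → ∀ x ∈ C, c • x ∈ C := by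
    intro c hc x hx
    rcases hc.eq_or_lt with h | h
    · simpa [← h] using hzero
    · exact hCsmul c h x hx
  -- standard basis vectors
  set e : Fin N → (Fin N → ℝ) := fun i j => if i = j then 1 else 0 with he
  have heC : ∀ i : Fin N, e i ∈ C := by
    intro i
    have hmem : ∀ n : ℕ, (1 / ((n : ℝ) + 1) : ℝ) • (a0 - w) + e i ∈ coneHull S := by
      intro n
      have haup : a0 + ((n : ℝ) + 1) • e i ∈ A := by
        refine hA.2.2 a0 ha0 _ fun j => ?_
        have hc : (a0 + ((n : ℝ) + 1) • e i) j
            = a0 j + ((n : ℝ) + 1) * (if i = j then 1 else 0) := rfl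
        rw [hc]
        by_cases h : i = j
        · rw [if_pos h, mul_one]
          have hn : (0:ℝ) ≤ (n:ℝ) := Nat.cast_nonneg n
          linarith
        · simp [h]
      have hm : (1 / ((n : ℝ) + 1) : ℝ) • ((a0 + ((n : ℝ) + 1) • e i) - w) ∈ coneHull S :=
        ConeAux.coneHull_smul S (by positivity) (ConeAux.subset_coneHull S ⟨_, haup, rfl⟩)
      have hne : ((n : ℝ) + 1) ≠ 0 := by positivity
      have heq : (1 / ((n : ℝ) + 1) : ℝ) • ((a0 + ((n : ℝ) + 1) • e i) - w)
          = (1 / ((n : ℝ) + 1) : ℝ) • (a0 - w) + e i := by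
        have hstep : a0 + ((n : ℝ) + 1) • e i - w = (a0 - w) + ((n : ℝ) + 1) • e i := by
          abel
        rw [hstep, smul_add, smul_smul, one_div, inv_mul_cancel₀ hne, one_smul]
      rwa [heq] at hm
    have htt : Filter.Tendsto (fun n : ℕ => (1 / ((n : ℝ) + 1) : ℝ) • (a0 - w) + e i)
        Filter.atTop (nhds (e i)) := by
      have := (h0tt.smul_const (a0 - w)).add_const (e i)
      simpa using this
    exact mem_closure_of_tendsto htt (Filter.Eventually.of_forall hmem)
  have hneC : ∀ j : Fin N, K ≤ (j : ℕ) → -e j ∈ C := by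
    intro j hj
    have hz : ∀ n : ℕ, (fun i => if i = j then (-((n : ℝ) + 1)) else 0) ∈ A := by
      intro n
      obtain ⟨b, hbmem, hblt⟩ := not_bddBelow_iff.1 (hunb j hj) (-((n : ℝ) + 1))
      obtain ⟨a, haA, rfl⟩ := hbmem
      have hy : (fun i => min (a i) 0) ∈ A := by
        refine hsi a haA _ ?_
        funext i
        rcases le_total (a i) 0 with h | h
        · simp [min_eq_left h]
        · simp [min_eq_right h, max_eq_right (neg_nonpos.2 h)]
      refine hA.2.2 _ hy _ fun i => ?_
      by_cases h : i = j
      · subst h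
        simp only [if_pos rfl]
        exact (min_le_left _ _).trans hblt.le
      · simp only [if_neg h]
        exact min_le_right _ _
    have hmem : ∀ n : ℕ, -e j - (1 / ((n : ℝ) + 1) : ℝ) • w ∈ coneHull S := by
      intro n
      have hsm := ConeAux.coneHull_smul S (c := 1 / ((n : ℝ) + 1)) (by positivity)
        (ConeAux.subset_coneHull S ⟨_, hz n, rfl⟩)
      have hne : ((n : ℝ) + 1) ≠ 0 := by positivity
      have heq : (1 / ((n : ℝ) + 1) : ℝ) • ((fun i => if i = j then (-((n : ℝ) + 1)) else 0) - w)
          = -e j - (1 / ((n : ℝ) + 1) : ℝ) • w := by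
        funext i
        simp only [Pi.smul_apply, Pi.sub_apply, Pi.neg_apply, smul_eq_mul, he]
        by_cases h : i = j
        · subst h
          rw [if_pos rfl, if_pos rfl]
          field_simp
        · rw [if_neg h, if_neg (fun hji => h hji.symm)]
          ring
      rwa [heq] at hsm
    have htt : Filter.Tendsto (fun n : ℕ => -e j - (1 / ((n : ℝ) + 1) : ℝ) • w)
        Filter.atTop (nhds (-e j)) := by
      have := (tendsto_const_nhds (x := -e j) (f := Filter.atTop (α := ℕ))).sub
        (h0tt.smul_const w)
      simpa using this
    exact mem_closure_of_tendsto htt (Filter.Eventually.of_forall hmem)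
  -- conclude
  ext x
  constructor
  · exact fun hx => hsub hx
  · intro hx
    have hterm : ∀ i : Fin N, x i • e i ∈ C := by
      intro i
      by_cases hi : (i : ℕ) < K
      · exact hCsmul' _ (hx i hi) _ (heC i)
      · rcases le_or_gt 0 (x i) with h | h
        · exact hCsmul' _ h _ (heC i)
        · have hm := hCsmul' (-(x i)) (by linarith) _ (hneC i (le_of_not_gt hi))
          rwa [smul_neg, neg_smul, neg_neg] at hm
    have hsum : ∀ s : Finset (Fin N), (∑ i ∈ s, x i • e i) ∈ C := by
      intro s
      induction s using Finset.induction_on with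
      | empty => simpa using hzero
      | insert _ _ hnot ih =>
          rw [Finset.sum_insert hnot]
          exact hCadd _ (hterm _) _ ih
    have hrep : x = ∑ i : Fin N, x i • e i := pi_eq_sum_univ x
    rw [hrep]
    exact hsum Finset.univ
end

section
/- Let A ⊂ L^∞ be an acceptance set and ρ_A(X) := inf{m ∈ ℝ : X + m ∈ A} (cash-additive risk measure, finitely valued and Lipschitz). Define ρ_A^∨(X) := max(ρ_A(X), 0). Then ρ_A^∨ is surplus invariant (ρ_A^∨(X) = ρ_A^∨(-X⁻) for all X with ρ_A^∨(X) ≥ 0, equivalently for all X) if and only if the norm closure of A is surplus invariant. Moreover, if ρ_A(0) = 0, these are equivalent to ρ_A^∨ = ρ_A^∧, where ρ_A^∧(X) := ρ_A(-X⁻). -/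
open MeasureTheory

variable {Ω : Type*} [MeasurableSpace Ω]

/-- The cash-additive risk measure `ρ_A(X) = inf {m ∈ ℝ : X + m ∈ A}`. -/
noncomputable def rhoCash (μ : Measure Ω) [IsFiniteMeasure μ]
    (A : Set (Lp ℝ ⊤ μ)) (X : Lp ℝ ⊤ μ) : ℝ :=
  sInf {m : ℝ | X + Lp.const ⊤ μ m ∈ A}

namespace SurplusAux

variable {μ : Measure Ω} [IsProbabilityMeasure μ]

/-- Any element of `L^∞` is a.e. bounded above by (the constant equal to) its norm. -/
lemma le_const_norm (f : Lp ℝ ⊤ μ) : f ≤ Lp.const ⊤ μ ‖f‖ := by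
  rw [← Lp.coeFn_le]
  have hfin : eLpNormEssSup (⇑f) μ ≠ ⊤ := by
    rw [← eLpNorm_exponent_top]; exact Lp.eLpNorm_ne_top f
  filter_upwards [Lp.coeFn_const ⊤ μ (‖f‖ : ℝ),
    ae_le_eLpNormEssSup (f := ⇑f) (μ := μ)] with ω hc hb
  have h1 : ‖f ω‖ ≤ (eLpNormEssSup (⇑f) μ).toReal := by
    have := ENNReal.toReal_mono hfin hb
    simpa using this
  have h2 : (eLpNormEssSup (⇑f) μ).toReal = ‖f‖ := by
    rw [Lp.norm_def, eLpNorm_exponent_top]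
  calc f ω ≤ ‖f ω‖ := le_abs_self _
    _ ≤ ‖f‖ := h2 ▸ h1
    _ = (Lp.const ⊤ μ (‖f‖ : ℝ)) ω := by rw [hc]; rfl

lemma const_mono {a b : ℝ} (h : a ≤ b) :
    (Lp.const ⊤ μ a : Lp ℝ ⊤ μ) ≤ Lp.const ⊤ μ b := by
  rw [← Lp.coeFn_le]
  filter_upwards [Lp.coeFn_const ⊤ μ a, Lp.coeFn_const ⊤ μ b] with ω ha hb
  rw [ha, hb]; exact h

lemma norm_const_eq (c : ℝ) : ‖(Lp.const ⊤ μ c : Lp ℝ ⊤ μ)‖ = |c| := by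
  rw [Lp.norm_const (μ := μ) (p := ⊤) (c := c) (by norm_num)]
  simp [Real.norm_eq_abs, measure_univ]

variable {A : Set (Lp ℝ ⊤ μ)} (hA : IsAcceptanceSet μ A)

include hA in
lemma set_nonempty (X : Lp ℝ ⊤ μ) :
    {m : ℝ | X + Lp.const ⊤ μ m ∈ A}.Nonempty := by
  obtain ⟨X₀, hX₀⟩ := hA.1
  refine ⟨‖X₀ - X‖, hA.2.2 X₀ hX₀ _ ?_⟩
  have h := le_const_norm (X₀ - X)
  calc X₀ = (X₀ - X) + X := by abel
    _ ≤ Lp.const ⊤ μ ‖X₀ - X‖ + X := add_le_add_left h X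
    _ = X + Lp.const ⊤ μ ‖X₀ - X‖ := add_comm _ _

include hA in
lemma set_bddBelow (X : Lp ℝ ⊤ μ) :
    BddBelow {m : ℝ | X + Lp.const ⊤ μ m ∈ A} := by
  obtain ⟨W, hW⟩ := Set.ne_univ_iff_exists_notMem A |>.mp hA.2.1
  refine ⟨-‖X - W‖, fun m hm => ?_⟩
  by_contra h
  push_neg at h
  apply hW
  apply hA.2.2 _ hm W
  have h1 : X - W ≤ Lp.const ⊤ μ ‖X - W‖ := le_const_norm _
  have h2 : (Lp.const ⊤ μ m : Lp ℝ ⊤ μ) ≤ Lp.const ⊤ μ (-‖X - W‖) :=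
    const_mono h.le
  have h3 : (Lp.const ⊤ μ (-‖X - W‖) : Lp ℝ ⊤ μ) = -(Lp.const ⊤ μ ‖X - W‖) :=
    map_neg _ _
  calc X + Lp.const ⊤ μ m ≤ X + Lp.const ⊤ μ (-‖X - W‖) := add_le_add_right h2 X
    _ = X - Lp.const ⊤ μ ‖X - W‖ := by rw [h3]; abel
    _ ≤ X - (X - W) := by
        have := neg_le_neg h1
        simpa [sub_eq_add_neg] using add_le_add_right this X
    _ = W := by abel

include hA in
lemma rho_antitone {X Y : Lp ℝ ⊤ μ} (h : X ≤ Y) :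
    rhoCash μ A Y ≤ rhoCash μ A X := by
  apply csInf_le_csInf (set_bddBelow hA Y) (set_nonempty hA X)
  intro m hm
  exact hA.2.2 _ hm _ (add_le_add_left h _)

include hA in
lemma mem_of_rho_lt {X : Lp ℝ ⊤ μ} {m : ℝ} (h : rhoCash μ A X < m) :
    X + Lp.const ⊤ μ m ∈ A := by
  obtain ⟨m', hm', hlt⟩ := exists_lt_of_csInf_lt (set_nonempty hA X) h
  exact hA.2.2 _ hm' _ (add_le_add_right (const_mono hlt.le) X)

include hA in
lemma rho_cash_le (X : Lp ℝ ⊤ μ) (c : ℝ) :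
    rhoCash μ A (X + Lp.const ⊤ μ c) ≤ rhoCash μ A X - c := by
  rw [le_sub_iff_add_le]
  show _ ≤ sInf {m : ℝ | X + Lp.const ⊤ μ m ∈ A}
  apply le_csInf (set_nonempty hA X)
  intro m hm
  rw [← le_sub_iff_add_le]
  apply csInf_le (set_bddBelow hA _)
  show X + Lp.const ⊤ μ c + Lp.const ⊤ μ (m - c) ∈ A
  have heq : X + Lp.const ⊤ μ c + Lp.const ⊤ μ (m - c) = X + Lp.const ⊤ μ m := by
    rw [add_assoc, ← map_add]
    norm_num
  rw [heq]; exact hm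

include hA in
lemma rho_cash (X : Lp ℝ ⊤ μ) (c : ℝ) :
    rhoCash μ A (X + Lp.const ⊤ μ c) = rhoCash μ A X - c := by
  refine le_antisymm (rho_cash_le hA X c) ?_
  have h := rho_cash_le hA (X + Lp.const ⊤ μ c) (-c)
  have he : X + Lp.const ⊤ μ c + Lp.const ⊤ μ (-c) = X := by
    rw [add_assoc, ← map_add]; simp
  rw [he] at h
  linarith

include hA in
lemma rho_le_zero_of_mem {X : Lp ℝ ⊤ μ} (h : X ∈ A) : rhoCash μ A X ≤ 0 := by
  apply csInf_le (set_bddBelow hA X)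
  show X + Lp.const ⊤ μ 0 ∈ A
  rw [map_zero, add_zero]; exact h

include hA in
lemma mem_closure_iff {X : Lp ℝ ⊤ μ} : X ∈ closure A ↔ rhoCash μ A X ≤ 0 := by
  constructor
  · intro hX
    by_contra h
    push_neg at h
    obtain ⟨Y, hY, hd⟩ := Metric.mem_closure_iff.mp hX (rhoCash μ A X) h
    have h1 : Y ≤ X + Lp.const ⊤ μ ‖Y - X‖ := by
      have := le_const_norm (Y - X)
      calc Y = (Y - X) + X := by abel
        _ ≤ Lp.const ⊤ μ ‖Y - X‖ + X := add_le_add_left this X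
        _ = X + Lp.const ⊤ μ ‖Y - X‖ := add_comm _ _
    have h2 := rho_antitone hA h1
    rw [rho_cash hA] at h2
    have h3 := rho_le_zero_of_mem hA hY
    have h4 : ‖Y - X‖ = dist X Y := by
      rw [dist_eq_norm, ← norm_neg (X - Y), neg_sub]
    linarith [h4 ▸ hd]
  · intro h
    rw [Metric.mem_closure_iff]
    intro ε hε
    refine ⟨X + Lp.const ⊤ μ (ε / 2), mem_of_rho_lt hA (by linarith), ?_⟩
    rw [dist_eq_norm]
    have : X - (X + Lp.const ⊤ μ (ε / 2)) = -(Lp.const ⊤ μ (ε / 2)) := by abel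
    rw [this, norm_neg, norm_const_eq]
    rw [abs_of_pos (by linarith)]
    linarith

lemma lattice_key {G : Type*} [Lattice G] [AddCommGroup G]
    [CovariantClass G G (· + ·) (· ≤ ·)] {X t : G} (ht : 0 ≤ t) :
    (-(X ⊓ 0 + t)) ⊔ 0 = (-(X + t)) ⊔ 0 := by
  have h1 : -(X ⊓ 0 + t) = (-X ⊔ 0) + (-t) := by rw [neg_add, neg_inf, neg_zero]
  rw [h1, sup_add, neg_add]
  rw [sup_assoc]
  congr 1
  rw [show (0:G) + -t = -t by rw [zero_add]]
  exact sup_eq_right.mpr (neg_nonpos.mpr ht)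

lemma inf_eq_of_sup_eq {G : Type*} [Lattice G] [AddCommGroup G]
    [CovariantClass G G (· + ·) (· ≤ ·)] {X Y : G}
    (h : (-Y) ⊔ 0 = (-X) ⊔ 0) : Y ⊓ 0 = X ⊓ 0 := by
  have := congrArg Neg.neg h
  simpa [neg_sup] using this

end SurplusAux

open SurplusAux
theorem truncated_rho_surplus_invariant_iff
    (μ : Measure Ω) [IsProbabilityMeasure μ]
    (A : Set (Lp ℝ ⊤ μ)) (hA : IsAcceptanceSet μ A) :
    ((∀ X : Lp ℝ ⊤ μ, max (rhoCash μ A X) 0 = max (rhoCash μ A (X ⊓ 0)) 0) ↔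
      SurplusInvariant μ (closure A)) ∧
    (rhoCash μ A 0 = 0 →
      ((∀ X : Lp ℝ ⊤ μ, max (rhoCash μ A X) 0 = max (rhoCash μ A (X ⊓ 0)) 0) ↔
        (∀ X : Lp ℝ ⊤ μ, max (rhoCash μ A X) 0 = rhoCash μ A (X ⊓ 0)))) := by
  constructor
  · constructor
    · intro h X hX Y hY
      rw [mem_closure_iff hA] at hX ⊢
      have hXinf : rhoCash μ A (X ⊓ 0) ≤ 0 := by
        have hx := h X
        rw [max_eq_right hX] at hx
        have := le_max_left (rhoCash μ A (X ⊓ 0)) 0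
        linarith [hx ▸ this]
      have hYX : Y ⊓ 0 = X ⊓ 0 := inf_eq_of_sup_eq hY
      have h1 : rhoCash μ A Y ≤ rhoCash μ A (Y ⊓ 0) := rho_antitone hA inf_le_left
      rw [hYX] at h1
      linarith
    · intro h X
      set t := max (rhoCash μ A X) 0 with htdef
      have ht : 0 ≤ t := le_max_right _ _
      have h1 : X + Lp.const ⊤ μ t ∈ closure A := by
        rw [mem_closure_iff hA, rho_cash hA]
        have := le_max_left (rhoCash μ A X) 0
        linarith
      have hconst : (0 : Lp ℝ ⊤ μ) ≤ Lp.const ⊤ μ t := by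
        have := const_mono (μ := μ) ht
        rwa [map_zero] at this
      have h2 : (X ⊓ 0) + Lp.const ⊤ μ t ∈ closure A :=
        h _ h1 _ (lattice_key hconst)
      rw [mem_closure_iff hA, rho_cash hA] at h2
      have h3 : rhoCash μ A X ≤ rhoCash μ A (X ⊓ 0) := rho_antitone hA inf_le_left
      have h4 : max (rhoCash μ A (X ⊓ 0)) 0 ≤ t :=
        max_le (by linarith) ht
      have h5 : t ≤ max (rhoCash μ A (X ⊓ 0)) 0 :=
        max_le_max h3 le_rfl
      linarith
  · intro h0
    constructor
    · intro h X
      have hnn : 0 ≤ rhoCash μ A (X ⊓ 0) := by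
        have := rho_antitone hA (inf_le_right (a := X) (b := (0 : Lp ℝ ⊤ μ)))
        rw [h0] at this
        exact this
      rw [h X, max_eq_left hnn]
    · intro h X
      rw [h X]
      have hnn : 0 ≤ rhoCash μ A (X ⊓ 0) := by
        rw [← h X]; exact le_max_right _ _
      rw [max_eq_left hnn]
end

section
/- Let ρ: L^∞ → [0,∞) be a positive (normalized, decreasing, nonnegative) surplus-invariant risk measure. Then ρ = ρ_A^∨ for some surplus-invariant acceptance set A ⊂ L^∞ (and one may take A = {X : ρ(X) = 0}) if and only if ρ is cash additive subject to positivity, i.e., ρ(X + α) = ρ(X) − α for all X ∈ L^∞ and α ∈ ℝ with ρ(X) > max(α, 0). -/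
open MeasureTheory

variable {Ω : Type*} [MeasurableSpace Ω]

lemma lp_const_mono (μ : Measure Ω) [IsFiniteMeasure μ] {a b : ℝ} (hab : a ≤ b) :
    (Lp.const ⊤ μ a : Lp ℝ ⊤ μ) ≤ Lp.const ⊤ μ b := by
  rw [← Lp.coeFn_le]
  filter_upwards [Lp.coeFn_const (p := ⊤) (μ := μ) a, Lp.coeFn_const (p := ⊤) (μ := μ) b]
    with ω h1 h2
  rw [h1, h2]; exact hab

theorem casp_iff_truncated_representation
    (μ : Measure Ω) [IsProbabilityMeasure μ]
    (ρ : Lp ℝ ⊤ μ → ℝ)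
    (hmono : ∀ X Y : Lp ℝ ⊤ μ, X ≤ Y → ρ Y ≤ ρ X)
    (hpos : ∀ X, 0 ≤ ρ X) (hnorm : ρ 0 = 0)
    (hne : {X : Lp ℝ ⊤ μ | ρ X = 0}.Nonempty)
    (hproper : {X : Lp ℝ ⊤ μ | ρ X = 0} ≠ Set.univ)
    (hsi : ∀ X : Lp ℝ ⊤ μ, ρ X = ρ (X ⊓ 0)) :
    ((∃ A : Set (Lp ℝ ⊤ μ), IsAcceptanceSet μ A ∧ SurplusInvariant μ A ∧
        ∀ X, ρ X = max (rhoCash μ A X) 0) ↔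
      (∀ (X : Lp ℝ ⊤ μ) (α : ℝ), max α 0 < ρ X →
        ρ (X + Lp.const ⊤ μ α) = ρ X - α)) ∧
    ((∀ (X : Lp ℝ ⊤ μ) (α : ℝ), max α 0 < ρ X →
        ρ (X + Lp.const ⊤ μ α) = ρ X - α) →
      ∀ X, ρ X = max (rhoCash μ {Y : Lp ℝ ⊤ μ | ρ Y = 0} X) 0) := by
  -- The second statement: CASP implies the representation with A = {ρ = 0}.
  have main : (∀ (X : Lp ℝ ⊤ μ) (α : ℝ), max α 0 < ρ X →
        ρ (X + Lp.const ⊤ μ α) = ρ X - α) →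
      ∀ X, ρ X = max (rhoCash μ {Y : Lp ℝ ⊤ μ | ρ Y = 0} X) 0 := by
    intro hcasp X
    set S : Set ℝ := {m : ℝ | X + Lp.const ⊤ μ m ∈ {Y : Lp ℝ ⊤ μ | ρ Y = 0}} with hS
    rcases eq_or_lt_of_le (hpos X) with h0 | h0
    · -- ρ X = 0
      have h0 : ρ X = 0 := h0.symm
      have hmem : (0 : ℝ) ∈ S := by
        simp only [hS, Set.mem_setOf_eq, map_zero, add_zero]
        exact h0
      have hle : sInf S ≤ 0 := by
        by_cases hbdd : BddBelow S
        · exact csInf_le hbdd hmem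
        · rw [Real.sInf_of_not_bddBelow hbdd]
      rw [rhoCash, ← hS, h0, max_eq_right hle]
    · -- ρ X > 0
      have hmem : ρ X ∈ S := by
        have hle0 : ρ (X + Lp.const ⊤ μ (ρ X)) ≤ 0 := by
          by_contra hlt
          push_neg at hlt
          set ε := min (ρ X / 2) (ρ (X + Lp.const ⊤ μ (ρ X))) with hε
          have hεpos : 0 < ε := lt_min (by linarith) hlt
          have hεlt : ε ≤ ρ X / 2 := min_le_left _ _
          have hα : max (ρ X - ε) 0 < ρ X := by
            rw [max_lt_iff]; constructor <;> linarith
          have h1 : ρ (X + Lp.const ⊤ μ (ρ X - ε)) = ε := by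
            rw [hcasp X _ hα]; ring
          have h2 : ρ (X + Lp.const ⊤ μ (ρ X)) ≤ ρ (X + Lp.const ⊤ μ (ρ X - ε)) := by
            apply hmono
            exact add_le_add_right (lp_const_mono μ (by linarith)) X
          have h3 : ε ≤ ρ (X + Lp.const ⊤ μ (ρ X)) := min_le_right _ _
          -- so ρ(X + ρX) ≤ ε and ε ≤ ρ(X + ρX); but also we can shrink ε further
          -- use ε' = ε/2 to get contradiction
          have hα' : max (ρ X - ε / 2) 0 < ρ X := by
            rw [max_lt_iff]; constructor <;> linarith
          have h1' : ρ (X + Lp.const ⊤ μ (ρ X - ε / 2)) = ε / 2 := by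
            rw [hcasp X _ hα']; ring
          have h2' : ρ (X + Lp.const ⊤ μ (ρ X)) ≤ ρ (X + Lp.const ⊤ μ (ρ X - ε / 2)) := by
            apply hmono
            exact add_le_add_right (lp_const_mono μ (by linarith)) X
          rw [h1'] at h2'
          linarith
        exact le_antisymm hle0 (hpos _)
      have hlb : ∀ m ∈ S, ρ X ≤ m := by
        intro m hm
        by_contra hlt
        push_neg at hlt
        have hα : max m 0 < ρ X := by
          rw [max_lt_iff]; exact ⟨hlt, h0⟩
        have := hcasp X m hα
        rw [Set.mem_setOf_eq] at hm
        rw [hm] at this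
        have : m = ρ X := by linarith
        exact absurd this (ne_of_lt hlt)
      have hinf : sInf S = ρ X :=
        le_antisymm (csInf_le ⟨ρ X, hlb⟩ hmem) (le_csInf ⟨ρ X, hmem⟩ hlb)
      rw [rhoCash, ← hS, hinf, max_eq_left (le_of_lt h0)]
  refine ⟨⟨?_, ?_⟩, main⟩
  · -- representation → CASP
    rintro ⟨A, _, _, hrep⟩ X α hα
    set S : Set ℝ := {m : ℝ | X + Lp.const ⊤ μ m ∈ A} with hSdef
    have hρX : 0 < ρ X := lt_of_le_of_lt (le_max_right α 0) hα
    have hrX : rhoCash μ A X = ρ X := by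
      have := hrep X
      rcases le_or_gt (rhoCash μ A X) 0 with h | h
      · rw [max_eq_right h] at this; linarith
      · rw [max_eq_left (le_of_lt h)] at this; linarith
    have hinfS : sInf S = ρ X := hrX
    have hSne : S.Nonempty := by
      by_contra hemp
      rw [Set.not_nonempty_iff_eq_empty] at hemp
      rw [hemp, Real.sInf_empty] at hinfS
      linarith
    have hSbdd : BddBelow S := by
      by_contra hbdd
      rw [Real.sInf_of_not_bddBelow hbdd] at hinfS
      linarith
    -- the set for X + α
    set T : Set ℝ := {m : ℝ | (X + Lp.const ⊤ μ α) + Lp.const ⊤ μ m ∈ A} with hTdef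
    have hTS : ∀ m : ℝ, m ∈ T ↔ α + m ∈ S := by
      intro m
      simp only [hTdef, hSdef, Set.mem_setOf_eq, add_assoc, ← map_add]
    have hTne : T.Nonempty := by
      obtain ⟨m, hm⟩ := hSne
      exact ⟨m - α, by rw [hTS]; simpa using hm⟩
    have hTbdd : BddBelow T := by
      obtain ⟨b, hb⟩ := hSbdd
      exact ⟨b - α, fun m hm => by
        have := hb ((hTS m).mp hm); linarith⟩
    have hinfT : sInf T = sInf S - α := by
      apply le_antisymm
      · rw [le_sub_iff_add_le]
        apply le_csInf hSne
        intro m hm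
        have : m - α ∈ T := by rw [hTS]; simpa using hm
        have := csInf_le hTbdd this
        linarith
      · apply le_csInf hTne
        intro m hm
        have := csInf_le hSbdd ((hTS m).mp hm)
        linarith
    have hpos' : 0 < sInf S - α := by
      have : α ≤ max α 0 := le_max_left _ _
      rw [hinfS]; linarith
    rw [hrep (X + Lp.const ⊤ μ α), rhoCash, ← hTdef, hinfT,
      max_eq_left (le_of_lt hpos'), hinfS]
  · -- CASP → representation (take A = {ρ = 0})
    intro hcasp
    refine ⟨{Y : Lp ℝ ⊤ μ | ρ Y = 0}, ⟨hne, hproper, ?_⟩, ?_, main hcasp⟩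
    · intro X hX Y hXY
      exact le_antisymm (hX ▸ hmono X Y hXY) (hpos Y)
    · intro X hX Y hYX
      have hinf : Y ⊓ 0 = X ⊓ 0 := by
        have h1 : Y ⊓ 0 = -((-Y) ⊔ (0 : Lp ℝ ⊤ μ)) := by
          rw [neg_sup, neg_neg, neg_zero]
        have h2 : X ⊓ 0 = -((-X) ⊔ (0 : Lp ℝ ⊤ μ)) := by
          rw [neg_sup, neg_neg, neg_zero]
        rw [h1, h2, hYX]
      show ρ Y = 0
      rw [hsi Y, hinf, ← hsi X]
      exact hX
end

section
/- Let ρ: L^∞ → [0,∞) be a positive, surplus-invariant risk measure that is cash compatible, i.e., ρ(X + ρ(X)) = 0 for all X ∈ L^∞. Then ρ = ρ_A^∨ for some surplus-invariant acceptance set A ⊂ L^∞ (one may take A = {X : ρ(X) = 0}) if and only if ρ is cash subadditive, i.e., ρ(X + α) ≥ ρ(X) − α for all X ∈ L^∞ and α > 0. -/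
open MeasureTheory

variable {Ω : Type*} [MeasurableSpace Ω]

lemma lpConst_mono (μ : Measure Ω) [IsFiniteMeasure μ] {m m' : ℝ} (h : m ≤ m') :
    Lp.const ⊤ μ m ≤ Lp.const ⊤ μ m' := by
  rw [← Lp.coeFn_le]
  filter_upwards [Lp.coeFn_const (μ := μ) (p := ⊤) m, Lp.coeFn_const (μ := μ) (p := ⊤) m']
    with ω h1 h2
  show ((Lp.const ⊤ μ m : Lp ℝ ⊤ μ) : Ω → ℝ) ω ≤ ((Lp.const ⊤ μ m' : Lp ℝ ⊤ μ) : Ω → ℝ) ω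
  rw [h1, h2]; exact h

theorem cash_compatible_truncated_representation_iff_cash_subadditive
    (μ : Measure Ω) [IsProbabilityMeasure μ]
    (ρ : Lp ℝ ⊤ μ → ℝ)
    (hmono : ∀ X Y : Lp ℝ ⊤ μ, X ≤ Y → ρ Y ≤ ρ X)
    (hpos : ∀ X, 0 ≤ ρ X) (hnorm : ρ 0 = 0)
    (hne : {X : Lp ℝ ⊤ μ | ρ X = 0}.Nonempty)
    (hproper : {X : Lp ℝ ⊤ μ | ρ X = 0} ≠ Set.univ)
    (hsi : ∀ X : Lp ℝ ⊤ μ, ρ X = ρ (X ⊓ 0))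
    (hcc : ∀ X : Lp ℝ ⊤ μ, ρ (X + Lp.const ⊤ μ (ρ X)) = 0) :
    ((∃ A : Set (Lp ℝ ⊤ μ), IsAcceptanceSet μ A ∧ SurplusInvariant μ A ∧
        ∀ X, ρ X = max (rhoCash μ A X) 0) ↔
      (∀ (X : Lp ℝ ⊤ μ) (α : ℝ), 0 < α →
        ρ X - α ≤ ρ (X + Lp.const ⊤ μ α))) ∧
    ((∀ (X : Lp ℝ ⊤ μ) (α : ℝ), 0 < α →
        ρ X - α ≤ ρ (X + Lp.const ⊤ μ α)) →
      ∀ X, ρ X = max (rhoCash μ {Y : Lp ℝ ⊤ μ | ρ Y = 0} X) 0) := by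
  -- Key representation result under cash subadditivity
  have key : (∀ (X : Lp ℝ ⊤ μ) (α : ℝ), 0 < α → ρ X - α ≤ ρ (X + Lp.const ⊤ μ α)) →
      ∀ X, ρ X = max (rhoCash μ {Y : Lp ℝ ⊤ μ | ρ Y = 0} X) 0 := by
    intro hcs X
    set S := {m : ℝ | X + Lp.const ⊤ μ m ∈ {Y : Lp ℝ ⊤ μ | ρ Y = 0}} with hSdef
    have hSmem : ∀ m : ℝ, m ∈ S ↔ ρ (X + Lp.const ⊤ μ m) = 0 := fun m => Iff.rfl
    have hρXS : ρ X ∈ S := hcc X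
    have hrc : rhoCash μ {Y : Lp ℝ ⊤ μ | ρ Y = 0} X = sInf S := rfl
    -- sInf S ≤ ρ X
    have hsInf_le : sInf S ≤ ρ X := by
      by_cases hbdd : BddBelow S
      · exact csInf_le hbdd hρXS
      · rw [Real.sInf_of_not_bddBelow hbdd]; exact hpos X
    -- upper bound on ρ X from members of S
    have hupper : ∀ m ∈ S, ρ X ≤ max m 0 := by
      intro m hm
      rw [hSmem] at hm
      rcases le_or_gt m 0 with hm0 | hm0
      · have hle : X + Lp.const ⊤ μ m ≤ X := by
          calc X + Lp.const ⊤ μ m ≤ X + Lp.const ⊤ μ 0 :=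
                add_le_add_right (lpConst_mono μ hm0) X
            _ = X := by rw [map_zero, add_zero]
        have := hmono _ _ hle
        rw [hm] at this
        exact le_trans this (le_max_right _ _)
      · have := hcs X m hm0
        rw [hm] at this
        have : ρ X ≤ m := by linarith
        exact le_trans this (le_max_left _ _)
    refine le_antisymm ?_ (by rw [hrc]; exact max_le hsInf_le (hpos X))
    by_cases h0 : ρ X = 0
    · rw [h0]; exact le_max_right _ _
    · have hρpos : 0 < ρ X := (hpos X).lt_of_ne (Ne.symm h0)
      have hlb : ∀ m ∈ S, ρ X ≤ m := by
        intro m hm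
        have h' := hupper m hm
        rcases le_or_gt m 0 with h | h
        · rw [max_eq_right h] at h'; linarith
        · rwa [max_eq_left h.le] at h'
      have : ρ X ≤ sInf S := le_csInf ⟨_, hρXS⟩ hlb
      rw [hrc]
      exact le_trans this (le_max_left _ _)
  refine ⟨⟨?_, ?_⟩, key⟩
  · -- representation → cash subadditivity
    rintro ⟨A, hAacc, hAsi, hrep⟩ X α hα
    rcases le_or_gt (ρ X) α with h | h
    · linarith [hpos (X + Lp.const ⊤ μ α)]
    · have hsum : ∀ m : ℝ, (X + Lp.const ⊤ μ α) + Lp.const ⊤ μ m = X + Lp.const ⊤ μ (α + m) := by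
        intro m; rw [map_add, add_assoc]
      -- ρ X = rhoCash μ A X
      have hXeq : ρ X = rhoCash μ A X := by
        rcases le_or_gt (rhoCash μ A X) 0 with hc | hc
        · rw [hrep X, max_eq_right hc] at h; linarith
        · rw [hrep X, max_eq_left hc.le]
      -- the defining set for X is nonempty and bounded below
      have hSne : {m : ℝ | X + Lp.const ⊤ μ m ∈ A}.Nonempty := by
        by_contra hemp
        rw [Set.not_nonempty_iff_eq_empty] at hemp
        have : rhoCash μ A X = 0 := by
          show sInf {m : ℝ | X + Lp.const ⊤ μ m ∈ A} = 0
          rw [hemp, Real.sInf_empty]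
        rw [this] at hXeq; linarith
      have hSbdd : BddBelow {m : ℝ | X + Lp.const ⊤ μ m ∈ A} := by
        by_contra hbdd
        have : rhoCash μ A X = 0 := Real.sInf_of_not_bddBelow hbdd
        rw [this] at hXeq; linarith
      have hne' : {m : ℝ | (X + Lp.const ⊤ μ α) + Lp.const ⊤ μ m ∈ A}.Nonempty := by
        obtain ⟨s, hs⟩ := hSne
        refine ⟨s - α, ?_⟩
        show (X + Lp.const ⊤ μ α) + Lp.const ⊤ μ (s - α) ∈ A
        rw [hsum, add_sub_cancel]
        exact hs
      have hshift : rhoCash μ A X - α ≤ rhoCash μ A (X + Lp.const ⊤ μ α) := by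
        have hXr : rhoCash μ A X = sInf {m : ℝ | X + Lp.const ⊤ μ m ∈ A} := rfl
        show rhoCash μ A X - α ≤
          sInf {m : ℝ | (X + Lp.const ⊤ μ α) + Lp.const ⊤ μ m ∈ A}
        refine le_csInf hne' ?_
        intro b hb
        have hbS : α + b ∈ {m : ℝ | X + Lp.const ⊤ μ m ∈ A} := by
          show X + Lp.const ⊤ μ (α + b) ∈ A
          rw [← hsum]; exact hb
        have := csInf_le hSbdd hbS
        rw [hXr]
        linarith
      calc ρ X - α = rhoCash μ A X - α := by rw [hXeq]
        _ ≤ rhoCash μ A (X + Lp.const ⊤ μ α) := hshift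
        _ ≤ max (rhoCash μ A (X + Lp.const ⊤ μ α)) 0 := le_max_left _ _
        _ = ρ (X + Lp.const ⊤ μ α) := (hrep _).symm
  · -- cash subadditivity → representation
    intro hcs
    refine ⟨{Y : Lp ℝ ⊤ μ | ρ Y = 0}, ⟨hne, hproper, ?_⟩, ?_, key hcs⟩
    · intro X hX Y hXY
      exact le_antisymm (le_of_le_of_eq (hmono X Y hXY) hX) (hpos Y)
    · intro X hX Y hsup
      have hinf : Y ⊓ 0 = X ⊓ 0 := by
        have := congrArg (fun Z : Lp ℝ ⊤ μ => -Z) hsup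
        simpa [neg_sup] using this
      show ρ Y = 0
      rw [hsi Y, hinf, ← hsi X]
      exact hX
end
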